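/- arXiv:2003.12268 — 12 statements merged into one kernel-verified Lean document; each statement's English description precedes it below -/
import Mathlib

section
/- Let f : ℝ × ℝ → ℝ be continuously differentiable and let t₀, α, h ∈ ℝ be fixed. Then the one-step map T : ℝ × ℝ → ℝ × ℝ of method (3.1), defined by T(x, v) = (x + h·v, v + h·f(x + h·v, t₀ + α·h)), is differentiable at every point and the determinant of its Fréchet derivative equals 1 at every point; in particular T preserves area (Lebesgue measure) on ℝ². -/
open MeasureTheory

/-- Method (3.1): the one-step map `T (x, v) = (x + h·v, v + h·f(x + h·v, t₀ + α·h))`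
is everywhere differentiable, has Jacobian determinant 1 everywhere, and preserves
Lebesgue measure (area) on `ℝ²`. -/
theorem deVogelaere_method_3_1_area_preserving
    (f : ℝ × ℝ → ℝ) (hf : ContDiff ℝ 1 f) (t₀ α h : ℝ)
    (T : ℝ × ℝ → ℝ × ℝ)
    (hT : ∀ x v : ℝ, T (x, v) = (x + h * v, v + h * f (x + h * v, t₀ + α * h))) :
    (∀ p : ℝ × ℝ, DifferentiableAt ℝ T p) ∧
    (∀ p : ℝ × ℝ, (fderiv ℝ T p).det = 1) ∧
    MeasurePreserving T volume volume := by
  set c := t₀ + α * h with hc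
  have hTfun : T = fun p : ℝ × ℝ => (p.1 + h * p.2, p.2 + h * f (p.1 + h * p.2, c)) := by
    funext p; obtain ⟨x, v⟩ := p; exact hT x v
  have hfd := hf.differentiable one_ne_zero
  -- explicit derivative
  have key : ∀ p : ℝ × ℝ, HasFDerivAt T
      (((ContinuousLinearMap.fst ℝ ℝ ℝ) + h • (ContinuousLinearMap.snd ℝ ℝ ℝ)).prod
        ((ContinuousLinearMap.snd ℝ ℝ ℝ) + h • ((fderiv ℝ f (p.1 + h * p.2, c)).comp
          (((ContinuousLinearMap.fst ℝ ℝ ℝ) + h • (ContinuousLinearMap.snd ℝ ℝ ℝ)).prod 0)))) p := by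
    intro p
    rw [hTfun]
    set L1 : ℝ × ℝ →L[ℝ] ℝ := (ContinuousLinearMap.fst ℝ ℝ ℝ) + h • (ContinuousLinearMap.snd ℝ ℝ ℝ)
    have h1 : HasFDerivAt (fun p : ℝ × ℝ => p.1 + h * p.2) L1 p :=
      (hasFDerivAt_fst).add ((hasFDerivAt_snd).const_mul h)
    have h2 : HasFDerivAt (fun p : ℝ × ℝ => (p.1 + h * p.2, c)) (L1.prod 0) p :=
      h1.prodMk (hasFDerivAt_const c p)
    have h3 : HasFDerivAt (fun p : ℝ × ℝ => f (p.1 + h * p.2, c))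
        ((fderiv ℝ f (p.1 + h * p.2, c)).comp (L1.prod 0)) p :=
      ((hfd _).hasFDerivAt).comp p h2
    exact h1.prodMk ((hasFDerivAt_snd).add (h3.const_mul h))
  refine ⟨fun p => (key p).differentiableAt, fun p => ?_, ?_⟩
  · rw [(key p).fderiv]
    set A := fderiv ℝ f (p.1 + h * p.2, c)
    rw [ContinuousLinearMap.det]
    rw [← LinearMap.det_toMatrix (Module.Basis.finTwoProd ℝ), Matrix.det_fin_two]
    simp [LinearMap.toMatrix_apply, Module.Basis.coe_finTwoProd_repr, Module.Basis.finTwoProd_zero,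
      Module.Basis.finTwoProd_one, ContinuousLinearMap.prod_apply]
    have hA : A (h, 0) = h * A (1, 0) := by
      have := A.map_smul h ((1 : ℝ), (0 : ℝ))
      simpa using this
    rw [hA]; ring
  · rw [hTfun]
    have hvol : (volume : Measure (ℝ × ℝ)) = (volume : Measure ℝ).prod volume := by
      exact MeasureTheory.Measure.volume_eq_prod ℝ ℝ
    -- decompose: shear1 then shear2
    have s1 : MeasurePreserving (fun p : ℝ × ℝ => (p.1, p.2 + h * p.1))
        ((volume : Measure ℝ).prod volume) ((volume : Measure ℝ).prod volume) := by
      apply MeasurePreserving.skew_product (f := fun x : ℝ => x)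
        (g := fun v x => x + h * v) (MeasurePreserving.id _) ?_ ?_
      · exact measurable_snd.add (measurable_const.mul measurable_fst)
      · exact ae_of_all _ fun v => (measurePreserving_add_right volume (h * v)).map_eq
    have s1' : MeasurePreserving (fun p : ℝ × ℝ => (p.1 + h * p.2, p.2))
        ((volume : Measure ℝ).prod volume) ((volume : Measure ℝ).prod volume) := by
      have := ((Measure.measurePreserving_swap).comp s1).comp
        (Measure.measurePreserving_swap (μ := (volume : Measure ℝ)) (ν := volume))
      exact this
    have s2 : MeasurePreserving (fun p : ℝ × ℝ => (p.1, p.2 + h * f (p.1, c)))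
        ((volume : Measure ℝ).prod volume) ((volume : Measure ℝ).prod volume) := by
      apply MeasurePreserving.skew_product (f := fun x : ℝ => x)
        (g := fun x v => v + h * f (x, c)) (MeasurePreserving.id _) ?_ ?_
      · have hcont : Continuous fun p : ℝ × ℝ => f (p.1, c) :=
          hf.continuous.comp (continuous_fst.prodMk continuous_const)
        exact measurable_snd.add (measurable_const.mul hcont.measurable)
      · exact ae_of_all _ fun x => (measurePreserving_add_right volume (h * f (x, c))).map_eq
    have := s2.comp s1'
    rw [hvol]
    exact this
end

section
/- Let f : ℝ × ℝ → ℝ be continuously differentiable and let t₀, α, h ∈ ℝ be fixed. Then the one-step map T : ℝ × ℝ → ℝ × ℝ of method (3.3), defined by T(x, v) = (x + h·v + h²·f(x, t₀ + α·h), v + h·f(x, t₀ + α·h)), is differentiable at every point and the determinant of its Fréchet derivative equals 1 at every point; in particular T preserves area (Lebesgue measure) on ℝ². -/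
open MeasureTheory

/-- Method (3.3): the one-step map
`T (x, v) = (x + h·v + h²·f(x, t₀ + α·h), v + h·f(x, t₀ + α·h))`
is everywhere differentiable, has Jacobian determinant 1 everywhere, and preserves
Lebesgue measure (area) on `ℝ²`. -/
theorem deVogelaere_method_3_3_area_preserving
    (f : ℝ × ℝ → ℝ) (hf : ContDiff ℝ 1 f) (t₀ α h : ℝ)
    (T : ℝ × ℝ → ℝ × ℝ)
    (hT : ∀ x v : ℝ,
      T (x, v) = (x + h * v + h ^ 2 * f (x, t₀ + α * h), v + h * f (x, t₀ + α * h))) :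
    (∀ p : ℝ × ℝ, DifferentiableAt ℝ T p) ∧
    (∀ p : ℝ × ℝ, (fderiv ℝ T p).det = 1) ∧
    MeasurePreserving T volume volume := by
  -- the "force" as a function of x alone
  set g : ℝ → ℝ := fun x => f (x, t₀ + α * h) with hg
  have hgd : Differentiable ℝ g := by
    have : Differentiable ℝ (fun x : ℝ => (x, t₀ + α * h)) :=
      (differentiable_id.prodMk (differentiable_const _))
    exact (hf.differentiable one_ne_zero).comp this
  have hTfun : T = fun p : ℝ × ℝ => (p.1 + h * p.2 + h ^ 2 * g p.1, p.2 + h * g p.1) := by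
    funext p; rcases p with ⟨x, v⟩; exact hT x v
  -- explicit derivative at a point
  have key : ∀ p : ℝ × ℝ, HasFDerivAt T
      (((ContinuousLinearMap.fst ℝ ℝ ℝ) + h • (ContinuousLinearMap.snd ℝ ℝ ℝ)
          + (h ^ 2 * deriv g p.1) • (ContinuousLinearMap.fst ℝ ℝ ℝ)).prod
        ((ContinuousLinearMap.snd ℝ ℝ ℝ) + (h * deriv g p.1) • (ContinuousLinearMap.fst ℝ ℝ ℝ))) p := by
    intro p
    rw [hTfun]
    have hg1 : HasFDerivAt (fun q : ℝ × ℝ => g q.1)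
        ((deriv g p.1) • (ContinuousLinearMap.fst ℝ ℝ ℝ)) p :=
      (hgd p.1).hasDerivAt.comp_hasFDerivAt p (hasFDerivAt_fst)
    have h1 : HasFDerivAt (fun q : ℝ × ℝ => q.1 + h * q.2 + h ^ 2 * g q.1)
        ((ContinuousLinearMap.fst ℝ ℝ ℝ) + h • (ContinuousLinearMap.snd ℝ ℝ ℝ)
          + (h ^ 2 * deriv g p.1) • (ContinuousLinearMap.fst ℝ ℝ ℝ)) p := by
      have := (hasFDerivAt_fst.add ((hasFDerivAt_snd (𝕜 := ℝ) (E := ℝ) (F := ℝ) (p := p)).const_mul h)).add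
        (hg1.const_mul (h ^ 2))
      convert this using 1
      all_goals ext <;> simp [mul_comm, mul_assoc, mul_left_comm]
    have h2 : HasFDerivAt (fun q : ℝ × ℝ => q.2 + h * g q.1)
        ((ContinuousLinearMap.snd ℝ ℝ ℝ) + (h * deriv g p.1) • (ContinuousLinearMap.fst ℝ ℝ ℝ)) p := by
      have := hasFDerivAt_snd.add (hg1.const_mul h)
      convert this using 1
      all_goals ext <;> simp [mul_comm, mul_assoc, mul_left_comm]
    exact h1.prodMk h2
  refine ⟨fun p => (key p).differentiableAt, fun p => ?_, ?_⟩
  · rw [(key p).fderiv]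
    rw [ContinuousLinearMap.det, ← LinearMap.det_toMatrix (Module.Basis.finTwoProd ℝ)]
    rw [Matrix.det_fin_two]
    simp [LinearMap.toMatrix_apply, Module.Basis.finTwoProd, ContinuousLinearMap.prod_apply]
    ring
  · -- factor T as composition of two shears
    have hS1 : MeasurePreserving (fun p : ℝ × ℝ => (p.1, p.2 + h * g p.1)) volume volume := by
      rw [Measure.volume_eq_prod]
      exact (MeasurePreserving.id _).skew_product (g := fun x v => v + h * g x)
        (measurable_snd.add ((hgd.continuous.measurable.comp measurable_fst).const_mul h))
        (Filter.Eventually.of_forall fun x => (measurePreserving_add_right volume (h * g x)).map_eq)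
    have hS2 : MeasurePreserving (fun p : ℝ × ℝ => (p.1 + h * p.2, p.2)) volume volume := by
      have hS2' : MeasurePreserving (fun p : ℝ × ℝ => (p.1, p.2 + h * p.1)) volume volume := by
        rw [Measure.volume_eq_prod]
        exact (MeasurePreserving.id _).skew_product (g := fun x v => v + h * x)
          (measurable_snd.add (measurable_fst.const_mul h))
          (Filter.Eventually.of_forall fun x => (measurePreserving_add_right volume (h * x)).map_eq)
      have : (fun p : ℝ × ℝ => (p.1 + h * p.2, p.2))
          = Prod.swap ∘ (fun p : ℝ × ℝ => (p.1, p.2 + h * p.1)) ∘ Prod.swap := by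
        funext p; simp [Prod.swap]
      rw [this, Measure.volume_eq_prod]
      exact (Measure.measurePreserving_swap.comp
        ((MeasurePreserving.id _).skew_product (g := fun x v => v + h * x)
          (measurable_snd.add (measurable_fst.const_mul h))
          (Filter.Eventually.of_forall fun x => (measurePreserving_add_right volume (h * x)).map_eq))).comp
        Measure.measurePreserving_swap
    have hcomp : T = (fun p : ℝ × ℝ => (p.1 + h * p.2, p.2)) ∘ (fun p : ℝ × ℝ => (p.1, p.2 + h * g p.1)) := by
      funext p; rw [hTfun]; simp; ring
    rw [hcomp]
    exact hS2.comp hS1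
end

section
/- Let f : ℝ × ℝ → ℝ be continuously differentiable, α ∈ ℝ, and let x : ℝ → ℝ be three times continuously differentiable on a neighborhood of t₀ with x''(t) = f(x(t), t) there. Write x₀ = x(t₀), v₀ = x'(t₀), and for each h set v̄₁(h) = v₀ + h·f(x₀ + h·v₀, t₀ + α·h). Then, as h → 0, v̄₁(h) − x'(t₀ + h) = [ (1/2)·v₀·∂₁f(x₀, t₀) + (α − 1/2)·∂₂f(x₀, t₀) ]·h² + o(h²), where ∂₁f and ∂₂f denote the partial derivatives of f with respect to its first and second argument. -/
open Asymptotics Filter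

/-- Second-order Taylor expansion in Peano form, for a real function. -/
lemma peano_second_order {g g' : ℝ → ℝ} {t₀ M : ℝ} {s : Set ℝ} (hs : s ∈ nhds t₀)
    (hg : ∀ t ∈ s, HasDerivAt g (g' t) t) (hg' : HasDerivAt g' M t₀) :
    (fun h : ℝ => g (t₀ + h) - g t₀ - h * g' t₀ - h ^ 2 / 2 * M) =o[nhds 0]
      fun h : ℝ => h ^ 2 := by
  rw [isLittleO_iff]
  intro ε εpos
  have hev : ∀ᶠ t in nhds t₀, ‖g' t - g' t₀ - (t - t₀) • M‖ ≤ ε * ‖t - t₀‖ :=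
    isLittleO_iff.mp (hasDerivAt_iff_isLittleO.mp hg') εpos
  obtain ⟨δ, δpos, hδ⟩ := Metric.mem_nhds_iff.mp (Filter.inter_mem hs hev)
  filter_upwards [Metric.ball_mem_nhds (0 : ℝ) δpos] with h hh
  have habs : |h| < δ := by simpa [Real.dist_eq] using hh
  set Ψ : ℝ → ℝ := fun u => g (t₀ + u) - g t₀ - u * g' t₀ - u ^ 2 / 2 * M with hΨdef
  set Ψ' : ℝ → ℝ := fun u => g' (t₀ + u) - g' t₀ - u * M with hΨ'def
  have hmem : ∀ u ∈ Set.Icc (-|h|) |h|, t₀ + u ∈ Metric.ball t₀ δ := by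
    intro u hu
    have : |u| ≤ |h| := abs_le.mpr ⟨hu.1, hu.2⟩
    simp only [Metric.mem_ball, Real.dist_eq, add_sub_cancel_left]
    exact lt_of_le_of_lt this habs
  have hder : ∀ u ∈ Set.Icc (-|h|) |h|,
      HasDerivWithinAt Ψ (Ψ' u) (Set.Icc (-|h|) |h|) u := by
    intro u hu
    have h1 : HasDerivAt (fun u : ℝ => g (t₀ + u)) (g' (t₀ + u)) u := by
      have := (hg (t₀ + u) ((hδ (hmem u hu)).1)).comp u
        ((hasDerivAt_id u).const_add t₀)
      simp only [mul_one] at this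
      exact this
    have h2 : HasDerivAt (fun u : ℝ => u * g' t₀) (g' t₀) u := by
      simpa using (hasDerivAt_id u).mul_const (g' t₀)
    have h3 : HasDerivAt (fun u : ℝ => u ^ 2 / 2 * M) (u * M) u := by
      have := ((hasDerivAt_pow 2 u).div_const 2).mul_const M
      exact this.congr_deriv (by norm_num)
    exact (((h1.sub_const (g t₀)).sub h2).sub h3).hasDerivWithinAt
  have hbound : ∀ u ∈ Set.Icc (-|h|) |h|, ‖Ψ' u‖ ≤ ε * |h| := by
    intro u hu
    have hu' : |u| ≤ |h| := abs_le.mpr ⟨hu.1, hu.2⟩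
    have := (hδ (hmem u hu)).2
    simp only [Set.mem_setOf_eq, add_sub_cancel_left] at this
    calc ‖Ψ' u‖ = ‖g' (t₀ + u) - g' t₀ - u • M‖ := by simp [hΨ'def, smul_eq_mul]
    _ ≤ ε * ‖u‖ := this
    _ ≤ ε * |h| := by
        have : ‖u‖ = |u| := rfl
        rw [this]
        exact mul_le_mul_of_nonneg_left hu' εpos.le
  have key := Convex.norm_image_sub_le_of_norm_hasDerivWithin_le hder hbound
    (convex_Icc _ _) (Set.mem_Icc.mpr ⟨neg_nonpos.mpr (abs_nonneg h), abs_nonneg h⟩)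
    (Set.mem_Icc.mpr ⟨neg_abs_le h, le_abs_self h⟩)
  have hΨ0 : Ψ 0 = 0 := by simp [hΨdef]
  rw [hΨ0, sub_zero, sub_zero] at key
  calc ‖Ψ h‖ ≤ ε * |h| * ‖h‖ := key
  _ = ε * ‖h ^ 2‖ := by
      rw [Real.norm_eq_abs, Real.norm_eq_abs, abs_pow]
      ring

/-- Local error of the velocity component of method (3.1): with
`v̄₁(h) = v₀ + h·f(x₀ + h·v₀, t₀ + α·h)`,
`v̄₁(h) − x'(t₀ + h) = [(1/2)·v₀·∂₁f(x₀,t₀) + (α − 1/2)·∂₂f(x₀,t₀)]·h² + o(h²)`. -/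
theorem deVogelaere_method_3_1_velocity_error
    (f : ℝ × ℝ → ℝ) (hf : ContDiff ℝ 1 f) (α t₀ : ℝ)
    (x : ℝ → ℝ) (s : Set ℝ) (hs : s ∈ nhds t₀)
    (hx : ContDiffOn ℝ 3 x s)
    (hode : ∀ t ∈ s, deriv (deriv x) t = f (x t, t)) :
    (fun h : ℝ =>
        (deriv x t₀ + h * f (x t₀ + h * deriv x t₀, t₀ + α * h)) - deriv x (t₀ + h)
          - ((1 / 2) * deriv x t₀ * deriv (fun u => f (u, t₀)) (x t₀)
              + (α - 1 / 2) * deriv (fun t => f (x t₀, t)) t₀) * h ^ 2)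
      =o[nhds 0] fun h : ℝ => h ^ 2 := by
  set x₀ := x t₀ with hx₀
  set v₀ := deriv x t₀ with hv₀
  set P := fderiv ℝ f (x₀, t₀) with hP
  have hfd : HasFDerivAt f P (x₀, t₀) :=
    (hf.differentiable one_ne_zero (x₀, t₀)).hasFDerivAt
  set A := P (1, 0) with hA
  set B := P (0, 1) with hB
  have hPab : ∀ a b : ℝ, P (a, b) = a * A + b * B := by
    intro a b
    have hab : ((a, b) : ℝ × ℝ) = a • ((1 : ℝ), (0 : ℝ)) + b • ((0 : ℝ), (1 : ℝ)) := by
      simp [Prod.ext_iff]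
    rw [hab, map_add, map_smul, map_smul, smul_eq_mul, smul_eq_mul]
  -- partial derivatives
  have hdA : deriv (fun u => f (u, t₀)) x₀ = A := by
    have h1 : HasDerivAt (fun u : ℝ => ((u : ℝ), t₀)) ((1 : ℝ), (0 : ℝ)) x₀ :=
      (hasDerivAt_id x₀).prodMk (hasDerivAt_const x₀ t₀)
    exact (hfd.comp_hasDerivAt x₀ h1).deriv
  have hdB : deriv (fun t => f (x₀, t)) t₀ = B := by
    have h1 : HasDerivAt (fun t : ℝ => (x₀, (t : ℝ))) ((0 : ℝ), (1 : ℝ)) t₀ :=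
      (hasDerivAt_const t₀ x₀).prodMk (hasDerivAt_id t₀)
    exact (hfd.comp_hasDerivAt t₀ h1).deriv
  -- differentiability of x and deriv x near t₀
  set U := interior s with hU
  have hUopen : IsOpen U := isOpen_interior
  have ht₀U : t₀ ∈ U := mem_interior_iff_mem_nhds.mpr hs
  have hxU : ContDiffOn ℝ 3 x U := hx.mono interior_subset
  have hg2 : ContDiffOn ℝ 2 (deriv x) U :=
    hxU.deriv_of_isOpen hUopen (by norm_num)
  have hxdiff : DifferentiableOn ℝ x U := hxU.differentiableOn (by norm_num)
  have hgdiff : DifferentiableOn ℝ (deriv x) U := hg2.differentiableOn (by norm_num)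
  have hx' : HasDerivAt x v₀ t₀ :=
    ((hxdiff t₀ ht₀U).differentiableAt (hUopen.mem_nhds ht₀U)).hasDerivAt
  have hgderiv : ∀ t ∈ U, HasDerivAt (deriv x) (f (x t, t)) t := by
    intro t ht
    have := ((hgdiff t ht).differentiableAt (hUopen.mem_nhds ht)).hasDerivAt
    rwa [hode t (interior_subset ht)] at this
  -- derivative of φ t = f (x t, t) at t₀
  have hφ : HasDerivAt (fun t => f (x t, t)) (v₀ * A + B) t₀ := by
    have h1 : HasDerivAt (fun t : ℝ => (x t, (t : ℝ))) ((v₀ : ℝ), (1 : ℝ)) t₀ :=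
      hx'.prodMk (hasDerivAt_id t₀)
    have hfd' : HasFDerivAt f P (x t₀, t₀) := hx₀ ▸ hfd
    have h2 : HasDerivAt (fun t => f (x t, t)) (P (v₀, 1)) t₀ :=
      HasFDerivAt.comp_hasDerivAt (f := fun t : ℝ => (x t, t)) t₀ hfd' h1
    rwa [hPab v₀ 1, one_mul] at h2
  -- second-order Peano expansion of deriv x
  have T2 : (fun h : ℝ => deriv x (t₀ + h) - v₀ - h * f (x₀, t₀)
      - h ^ 2 / 2 * (v₀ * A + B)) =o[nhds 0] fun h : ℝ => h ^ 2 := by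
    have := peano_second_order (hUopen.mem_nhds ht₀U) hgderiv hφ
    simpa [hv₀, hx₀] using this
  -- first-order expansion of F h = f (x₀ + h v₀, t₀ + α h)
  have hF : HasDerivAt (fun h : ℝ => f (x₀ + h * v₀, t₀ + α * h)) (v₀ * A + α * B) 0 := by
    have h1 : HasDerivAt (fun h : ℝ => x₀ + h * v₀) v₀ 0 := by
      simpa using ((hasDerivAt_id (0 : ℝ)).mul_const v₀).const_add x₀
    have h2 : HasDerivAt (fun h : ℝ => t₀ + α * h) α 0 := by
      simpa using ((hasDerivAt_id (0 : ℝ)).const_mul α).const_add t₀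
    have h3 : HasDerivAt (fun h : ℝ => (x₀ + h * v₀, t₀ + α * h)) ((v₀ : ℝ), (α : ℝ)) 0 :=
      h1.prodMk h2
    have h4 : HasFDerivAt f P ((fun h : ℝ => (x₀ + h * v₀, t₀ + α * h)) 0) := by
      simpa using hfd
    have := h4.comp_hasDerivAt 0 h3
    rwa [hPab v₀ α] at this
  have hFo : (fun h : ℝ => f (x₀ + h * v₀, t₀ + α * h) - f (x₀, t₀)
      - h * (v₀ * A + α * B)) =o[nhds 0] fun h : ℝ => h := by
    have := hasDerivAt_iff_isLittleO.mp hF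
    simpa [smul_eq_mul] using this
  have T1 : (fun h : ℝ => h * (f (x₀ + h * v₀, t₀ + α * h) - f (x₀, t₀)
      - h * (v₀ * A + α * B))) =o[nhds 0] fun h : ℝ => h ^ 2 := by
    have h0 := (isBigO_refl (fun h : ℝ => h) (nhds 0)).mul_isLittleO hFo
    have h1 : (fun h : ℝ => h ^ 2) = fun h : ℝ => h * h := by funext h; ring
    rw [h1]
    exact h0
  rw [hdA, hdB]
  have heq : (fun h : ℝ =>
        (v₀ + h * f (x₀ + h * v₀, t₀ + α * h)) - deriv x (t₀ + h)
          - ((1 / 2) * v₀ * A + (α - 1 / 2) * B) * h ^ 2)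
      = fun h : ℝ =>
        (h * (f (x₀ + h * v₀, t₀ + α * h) - f (x₀, t₀) - h * (v₀ * A + α * B)))
          - (deriv x (t₀ + h) - v₀ - h * f (x₀, t₀) - h ^ 2 / 2 * (v₀ * A + B)) := by
    funext h
    ring
  rw [heq]
  exact T1.sub T2
end

section
/- Let f : ℝ × ℝ → ℝ be continuously differentiable, α ∈ ℝ, and let x : ℝ → ℝ be three times continuously differentiable on a neighborhood of t₀ with x''(t) = f(x(t), t) there. Write x₀ = x(t₀), v₀ = x'(t₀), and for each h set v̄₁(h) = v₀ + h·f(x₀, t₀ + α·h) and x̄₁(h) = x₀ + h·v̄₁(h). Then, as h → 0, x̄₁(h) − x(t₀ + h) = (1/2)·h²·f(x₀, t₀) + o(h²) and v̄₁(h) − x'(t₀ + h) = [ −(1/2)·v₀·∂₁f(x₀, t₀) + (α − 1/2)·∂₂f(x₀, t₀) ]·h² + o(h²), where ∂₁f and ∂₂f denote the partial derivatives of f with respect to its first and second argument. -/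
open Asymptotics Filter

/-- Second-order Taylor expansion with Peano remainder for a `C²` function on an open set. -/
lemma peano2_aux {F : ℝ → ℝ} {U : Set ℝ} (hU : IsOpen U) {a : ℝ} (haU : a ∈ U)
    (hF : ContDiffOn ℝ 2 F U) :
    (fun h : ℝ => F (a + h) - F a - h * deriv F a - h ^ 2 / 2 * deriv (deriv F) a)
      =o[nhds 0] fun h : ℝ => h ^ 2 := by
  set c₁ := deriv F a with hc₁
  set c₂ := deriv (deriv F) a with hc₂
  have hF1 : ContDiffOn ℝ 1 (deriv F) U := hF.deriv_of_isOpen hU (by norm_num)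
  have hFd : ∀ y ∈ U, HasDerivAt F (deriv F y) y := fun y hy =>
    ((hF.contDiffAt (hU.mem_nhds hy)).differentiableAt (by norm_num)).hasDerivAt
  have hd2 : HasDerivAt (deriv F) c₂ a :=
    ((hF1.contDiffAt (hU.mem_nhds haU)).differentiableAt one_ne_zero).hasDerivAt
  set G : ℝ → ℝ := fun h => F (a + h) - F a - h * c₁ - h ^ 2 / 2 * c₂ with hG
  have hGd : ∀ y : ℝ, a + y ∈ U → HasDerivAt G (deriv F (a + y) - c₁ - y * c₂) y := by
    intro y hy
    have h1 : HasDerivAt (fun h : ℝ => F (a + h)) (deriv F (a + y)) y := by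
      have := (hFd _ hy).comp y ((hasDerivAt_id y).const_add a)
      rw [mul_one] at this
      exact this
    have h2 : HasDerivAt (fun h : ℝ => h * c₁) c₁ y := by
      simpa using (hasDerivAt_id y).mul_const c₁
    have h3 : HasDerivAt (fun h : ℝ => h ^ 2 / 2 * c₂) (y * c₂) y := by
      have := ((hasDerivAt_pow 2 y).div_const 2).mul_const c₂
      refine this.congr_deriv ?_
      ring
    exact ((h1.sub_const (F a)).sub h2).sub h3
  rw [isLittleO_iff]
  intro ε hε
  have hlo := hasDerivAt_iff_isLittleO.mp hd2
  rw [isLittleO_iff] at hlo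
  have hlo' := hlo hε
  rw [Metric.eventually_nhds_iff] at hlo'
  obtain ⟨δ₁, hδ₁, hb⟩ := hlo'
  obtain ⟨δ₂, hδ₂, hball⟩ := Metric.mem_nhds_iff.mp (hU.mem_nhds haU)
  rw [Metric.eventually_nhds_iff]
  refine ⟨min δ₁ δ₂, lt_min hδ₁ hδ₂, ?_⟩
  intro h hh
  rw [Real.dist_eq, sub_zero] at hh
  have key : ∀ y ∈ Set.Icc (-|h|) |h|, ‖deriv F (a + y) - c₁ - y * c₂‖ ≤ ε * |h| := by
    intro y hy
    have hyh : |y| ≤ |h| := abs_le.mpr ⟨hy.1, hy.2⟩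
    have hd : dist (a + y) a < δ₁ := by
      rw [Real.dist_eq]
      simpa using lt_of_le_of_lt hyh (lt_of_lt_of_le hh (min_le_left _ _))
    have hb' := hb hd
    have h1 : deriv F (a + y) - deriv F a - (a + y - a) • c₂
        = deriv F (a + y) - c₁ - y * c₂ := by
      rw [← hc₁]; simp only [smul_eq_mul]; ring
    rw [h1] at hb'
    rw [Real.norm_eq_abs] at hb' ⊢
    calc |deriv F (a + y) - c₁ - y * c₂| ≤ ε * ‖a + y - a‖ := hb'
      _ = ε * |y| := by rw [Real.norm_eq_abs]; congr 1; congr 1; ring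
      _ ≤ ε * |h| := by nlinarith [abs_nonneg y]
  have hmem : ∀ y ∈ Set.Icc (-|h|) |h|, a + y ∈ U := by
    intro y hy
    apply hball
    rw [Metric.mem_ball, Real.dist_eq]
    have hyh : |y| ≤ |h| := abs_le.mpr ⟨hy.1, hy.2⟩
    simpa using lt_of_le_of_lt hyh (lt_of_lt_of_le hh (min_le_right _ _))
  have hseg := Convex.norm_image_sub_le_of_norm_hasDerivWithin_le
    (f := G) (f' := fun y => deriv F (a + y) - c₁ - y * c₂) (C := ε * |h|)
    (fun y hy => (hGd y (hmem y hy)).hasDerivWithinAt) key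
    (convex_Icc _ _)
    (Set.mem_Icc.mpr ⟨neg_nonpos.mpr (abs_nonneg h), abs_nonneg h⟩)
    (Set.mem_Icc.mpr ⟨neg_abs_le h, le_abs_self h⟩)
  have hG0 : G 0 = 0 := by simp [hG]
  rw [hG0, sub_zero, sub_zero] at hseg
  calc ‖G h‖ ≤ ε * |h| * ‖h‖ := hseg
    _ = ε * ‖h ^ 2‖ := by rw [Real.norm_eq_abs, Real.norm_eq_abs, abs_pow]; ring

/-- Local errors of method (3.3): with `v̄₁(h) = v₀ + h·f(x₀, t₀ + α·h)` and
`x̄₁(h) = x₀ + h·v̄₁(h)`, one has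
`x̄₁(h) − x(t₀ + h) = (1/2)·h²·f(x₀, t₀) + o(h²)` and
`v̄₁(h) − x'(t₀ + h) = [−(1/2)·v₀·∂₁f(x₀,t₀) + (α − 1/2)·∂₂f(x₀,t₀)]·h² + o(h²)`. -/
theorem deVogelaere_method_3_3_local_errors
    (f : ℝ × ℝ → ℝ) (hf : ContDiff ℝ 1 f) (α t₀ : ℝ)
    (x : ℝ → ℝ) (s : Set ℝ) (hs : s ∈ nhds t₀)
    (hx : ContDiffOn ℝ 3 x s)
    (hode : ∀ t ∈ s, deriv (deriv x) t = f (x t, t)) :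
    ((fun h : ℝ =>
        (x t₀ + h * (deriv x t₀ + h * f (x t₀, t₀ + α * h))) - x (t₀ + h)
          - (1 / 2) * h ^ 2 * f (x t₀, t₀))
      =o[nhds 0] fun h : ℝ => h ^ 2) ∧
    ((fun h : ℝ =>
        (deriv x t₀ + h * f (x t₀, t₀ + α * h)) - deriv x (t₀ + h)
          - (-(1 / 2) * deriv x t₀ * deriv (fun u => f (u, t₀)) (x t₀)
              + (α - 1 / 2) * deriv (fun t => f (x t₀, t)) t₀) * h ^ 2)
      =o[nhds 0] fun h : ℝ => h ^ 2) := by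
  have ht₀s : t₀ ∈ s := mem_of_mem_nhds hs
  have hU : IsOpen (interior s) := isOpen_interior
  have ht₀ : t₀ ∈ interior s := mem_interior_iff_mem_nhds.mpr hs
  have hLf : HasFDerivAt f (fderiv ℝ f (x t₀, t₀)) (x t₀, t₀) :=
    (hf.differentiable one_ne_zero (x t₀, t₀)).hasFDerivAt
  have hxU : ContDiffOn ℝ 3 x (interior s) := hx.mono interior_subset
  have hxd : HasDerivAt x (deriv x t₀) t₀ :=
    ((hxU.contDiffAt (hU.mem_nhds ht₀)).differentiableAt (by norm_num)).hasDerivAt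
  have hA : deriv (deriv x) t₀ = f (x t₀, t₀) := hode t₀ ht₀s
  have heq : deriv (deriv x) =ᶠ[nhds t₀] fun t => f (x t, t) := by
    filter_upwards [hs] with t ht; exact hode t ht
  have h3 : deriv (deriv (deriv x)) t₀ = deriv (fun t => f (x t, t)) t₀ :=
    Filter.EventuallyEq.deriv_eq heq
  have hinner : HasDerivAt (fun t : ℝ => ((x t, t) : ℝ × ℝ)) (deriv x t₀, 1) t₀ :=
    hxd.prodMk (hasDerivAt_id t₀)
  have hgd : HasDerivAt (fun t => f (x t, t)) (fderiv ℝ f (x t₀, t₀) (deriv x t₀, 1)) t₀ := by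
    have := hLf.comp_hasDerivAt_of_eq t₀ hinner rfl
    exact this
  have hin1 : HasDerivAt (fun u : ℝ => ((u, t₀) : ℝ × ℝ)) (1, 0) (x t₀) :=
    (hasDerivAt_id (x t₀)).prodMk (hasDerivAt_const (x t₀) t₀)
  have hD1 : HasDerivAt (fun u => f (u, t₀)) (fderiv ℝ f (x t₀, t₀) (1, 0)) (x t₀) := by
    have := hLf.comp_hasDerivAt_of_eq (x t₀) hin1 rfl
    exact this
  have hin2 : HasDerivAt (fun t : ℝ => ((x t₀, t) : ℝ × ℝ)) (0, 1) t₀ :=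
    (hasDerivAt_const t₀ (x t₀)).prodMk (hasDerivAt_id t₀)
  have hD2 : HasDerivAt (fun t => f (x t₀, t)) (fderiv ℝ f (x t₀, t₀) (0, 1)) t₀ := by
    have := hLf.comp_hasDerivAt_of_eq t₀ hin2 rfl
    exact this
  have hsplit : fderiv ℝ f (x t₀, t₀) (deriv x t₀, 1)
      = deriv x t₀ * fderiv ℝ f (x t₀, t₀) (1, 0) + fderiv ℝ f (x t₀, t₀) (0, 1) := by
    have h : ((deriv x t₀, 1) : ℝ × ℝ)
        = deriv x t₀ • ((1, 0) : ℝ × ℝ) + ((0, 1) : ℝ × ℝ) := by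
      simp [Prod.ext_iff]
    rw [h, map_add, map_smul]; simp [smul_eq_mul]
  have hψin : HasDerivAt (fun h : ℝ => t₀ + α * h) α 0 := by
    simpa using ((hasDerivAt_id (0 : ℝ)).const_mul α).const_add t₀
  have hD2' : HasDerivAt (fun t => f (x t₀, t)) (fderiv ℝ f (x t₀, t₀) (0, 1))
      ((fun h : ℝ => t₀ + α * h) 0) := by simpa using hD2
  have hψ : HasDerivAt (fun h : ℝ => f (x t₀, t₀ + α * h))
      (fderiv ℝ f (x t₀, t₀) (0, 1) * α) 0 := by
    have := hD2'.comp 0 hψin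
    exact this
  have hψo : (fun h : ℝ => f (x t₀, t₀ + α * h) - f (x t₀, t₀)
      - h * (fderiv ℝ f (x t₀, t₀) (0, 1) * α)) =o[nhds 0] fun h : ℝ => h := by
    have := hasDerivAt_iff_isLittleO.mp hψ
    simpa [sub_zero, smul_eq_mul] using this
  have hψ1 : (fun h : ℝ => f (x t₀, t₀ + α * h) - f (x t₀, t₀))
      =o[nhds 0] fun _ : ℝ => (1 : ℝ) := by
    rw [isLittleO_one_iff]
    have := hψ.continuousAt.tendsto
    simp only [mul_zero, add_zero] at this
    simpa [sub_self] using this.sub_const (f (x t₀, t₀))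
  -- Taylor expansions
  have Tx := peano2_aux hU ht₀ (hxU.of_le (by norm_num))
  rw [hA] at Tx
  have hdxU : ContDiffOn ℝ 2 (deriv x) (interior s) := hxU.deriv_of_isOpen hU (by norm_num)
  have Tv := peano2_aux hU ht₀ hdxU
  have hC : deriv (deriv (deriv x)) t₀
      = deriv x t₀ * fderiv ℝ f (x t₀, t₀) (1, 0) + fderiv ℝ f (x t₀, t₀) (0, 1) := by
    rw [h3, hgd.deriv, hsplit]
  rw [hA, hC] at Tv
  constructor
  · have m1 : (fun h : ℝ => h ^ 2 * (f (x t₀, t₀ + α * h) - f (x t₀, t₀)))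
        =o[nhds 0] fun h : ℝ => h ^ 2 := by
      have := (isBigO_refl (fun h : ℝ => h ^ 2) (nhds 0)).mul_isLittleO hψ1
      simpa using this
    exact (Tx.neg_left.add m1).congr (fun h => by ring) fun h => rfl
  · have m2 : (fun h : ℝ => h * (f (x t₀, t₀ + α * h) - f (x t₀, t₀)
        - h * (fderiv ℝ f (x t₀, t₀) (0, 1) * α))) =o[nhds 0] fun h : ℝ => h ^ 2 := by
      have := (isBigO_refl (fun h : ℝ => h) (nhds 0)).mul_isLittleO hψo
      exact this.congr (fun h => rfl) fun h => (pow_two h).symm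
    rw [hD1.deriv, hD2.deriv]
    exact (Tv.neg_left.add m2).congr (fun h => by ring) fun h => rfl
end

section
/- Let f : ℝ × ℝ → ℝ be continuously differentiable and let t₀, α, h ∈ ℝ be fixed. Define T : ℝ × ℝ → ℝ × ℝ by T(x, v) = (x₂, v₂), where v₁ = v + (h/2)·f(x, t₀ + α·h), x₂ = x + h·v₁, and v₂ = v₁ + (h/2)·f(x₂, t₀ + (1 − α)·h). Then T is differentiable at every point and the determinant of its Fréchet derivative equals 1 at every point; in particular the second-order method (4.1) preserves area on ℝ². -/
open MeasureTheory

lemma clm_det_formula (A : ℝ × ℝ →L[ℝ] ℝ × ℝ) :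
    A.det = (A (1,0)).1 * (A (0,1)).2 - (A (0,1)).1 * (A (1,0)).2 := by
  have h1 : A.det = LinearMap.det (A : ℝ × ℝ →ₗ[ℝ] ℝ × ℝ) := rfl
  rw [h1, ← LinearMap.det_toMatrix (Module.Basis.finTwoProd ℝ), Matrix.det_fin_two]
  simp [LinearMap.toMatrix_apply, Module.Basis.finTwoProd]

lemma shear_mp (g : ℝ → ℝ) (hg : Measurable g) :
    MeasurePreserving (fun p : ℝ × ℝ => (p.1, p.2 + g p.1))
      (volume.prod volume) (volume.prod volume) := by
  refine (MeasurePreserving.id volume).skew_product (g := fun x y => y + g x)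
    (measurable_snd.add (hg.comp measurable_fst)) (ae_of_all _ fun x => ?_)
  exact (measurePreserving_add_right volume (g x)).map_eq

/-- Method (4.1): with `v₁ = v + (h/2)·f(x, t₀ + α·h)`, `x₂ = x + h·v₁`,
`v₂ = v₁ + (h/2)·f(x₂, t₀ + (1-α)·h)`, the one-step map `T (x, v) = (x₂, v₂)`
is everywhere differentiable, has Jacobian determinant 1 everywhere, and preserves
area (Lebesgue measure) on `ℝ²`. -/
theorem deVogelaere_method_4_1_area_preserving
    (f : ℝ × ℝ → ℝ) (hf : ContDiff ℝ 1 f) (t₀ α h : ℝ)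
    (T : ℝ × ℝ → ℝ × ℝ)
    (hT : ∀ x v : ℝ,
      T (x, v) =
        (x + h * (v + h / 2 * f (x, t₀ + α * h)),
         (v + h / 2 * f (x, t₀ + α * h)) +
           h / 2 * f (x + h * (v + h / 2 * f (x, t₀ + α * h)), t₀ + (1 - α) * h))) :
    (∀ p : ℝ × ℝ, DifferentiableAt ℝ T p) ∧
    (∀ p : ℝ × ℝ, (fderiv ℝ T p).det = 1) ∧
    MeasurePreserving T volume volume := by
  set g₁ : ℝ → ℝ := fun x => h / 2 * f (x, t₀ + α * h) with hg₁def
  set g₂ : ℝ → ℝ := fun x => h / 2 * f (x, t₀ + (1 - α) * h) with hg₂def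
  have hfd : Differentiable ℝ f := hf.differentiable one_ne_zero
  have hg₁ : Differentiable ℝ g₁ := fun x =>
    ((hfd ((x, t₀ + α * h))).comp x
      ((differentiableAt_id).prodMk (differentiableAt_const _))).const_mul _
  have hg₂ : Differentiable ℝ g₂ := fun x =>
    ((hfd ((x, t₀ + (1 - α) * h))).comp x
      ((differentiableAt_id).prodMk (differentiableAt_const _))).const_mul _
  have hTfun : T = fun p : ℝ × ℝ =>
      (p.1 + h * (p.2 + g₁ p.1), (p.2 + g₁ p.1) + g₂ (p.1 + h * (p.2 + g₁ p.1))) := by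
    funext p
    simpa using hT p.1 p.2
  -- explicit derivative at each point
  have key : ∀ p : ℝ × ℝ, HasFDerivAt T
      (((ContinuousLinearMap.fst ℝ ℝ ℝ) + h • ((ContinuousLinearMap.snd ℝ ℝ ℝ) +
          deriv g₁ p.1 • (ContinuousLinearMap.fst ℝ ℝ ℝ))).prod
        (((ContinuousLinearMap.snd ℝ ℝ ℝ) + deriv g₁ p.1 • (ContinuousLinearMap.fst ℝ ℝ ℝ)) +
          deriv g₂ (p.1 + h * (p.2 + g₁ p.1)) •
            ((ContinuousLinearMap.fst ℝ ℝ ℝ) + h • ((ContinuousLinearMap.snd ℝ ℝ ℝ) +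
              deriv g₁ p.1 • (ContinuousLinearMap.fst ℝ ℝ ℝ))))) p := by
    intro p
    have h1 : HasFDerivAt (fun q : ℝ × ℝ => g₁ q.1)
        (deriv g₁ p.1 • (ContinuousLinearMap.fst ℝ ℝ ℝ)) p :=
      ((hg₁ p.1).hasDerivAt).comp_hasFDerivAt p hasFDerivAt_fst
    have hF₁ : HasFDerivAt (fun q : ℝ × ℝ => q.1 + h * (q.2 + g₁ q.1))
        ((ContinuousLinearMap.fst ℝ ℝ ℝ) + h • ((ContinuousLinearMap.snd ℝ ℝ ℝ) +
          deriv g₁ p.1 • (ContinuousLinearMap.fst ℝ ℝ ℝ))) p := by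
      have := hasFDerivAt_fst.add ((hasFDerivAt_snd.add h1).const_mul h)
      simpa [smul_eq_mul, Pi.add_def] using this
    have h2 : HasFDerivAt (fun q : ℝ × ℝ => g₂ (q.1 + h * (q.2 + g₁ q.1)))
        (deriv g₂ (p.1 + h * (p.2 + g₁ p.1)) •
          ((ContinuousLinearMap.fst ℝ ℝ ℝ) + h • ((ContinuousLinearMap.snd ℝ ℝ ℝ) +
            deriv g₁ p.1 • (ContinuousLinearMap.fst ℝ ℝ ℝ)))) p :=
      ((hg₂ _).hasDerivAt).comp_hasFDerivAt p hF₁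
    rw [hTfun]
    exact hF₁.prodMk ((hasFDerivAt_snd.add h1).add h2)
  refine ⟨fun p => (key p).differentiableAt, fun p => ?_, ?_⟩
  · rw [(key p).fderiv, clm_det_formula]
    simp only [ContinuousLinearMap.prod_apply, ContinuousLinearMap.add_apply,
      ContinuousLinearMap.smul_apply, ContinuousLinearMap.coe_fst',
      ContinuousLinearMap.coe_snd', smul_eq_mul]
    ring
  · -- measure preserving: compose three shears
    have hvol : (volume : Measure (ℝ × ℝ)) = volume.prod volume := by
      exact Measure.volume_eq_prod ℝ ℝ
    have m1 := shear_mp g₁ hg₁.continuous.measurable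
    have m3 := shear_mp g₂ hg₂.continuous.measurable
    have m2 : MeasurePreserving (fun p : ℝ × ℝ => (p.1 + h * p.2, p.2))
        (volume.prod volume) (volume.prod volume) := by
      have minner := shear_mp (fun x => h * x) (measurable_const.mul measurable_id)
      have hcomp := (Measure.measurePreserving_swap.comp minner).comp
        (Measure.measurePreserving_swap (μ := (volume : Measure ℝ)) (ν := volume))
      exact hcomp
    have comp := (m3.comp m2).comp m1
    have hTeq : T = (fun p : ℝ × ℝ => (p.1, p.2 + g₂ p.1)) ∘
        (fun p : ℝ × ℝ => (p.1 + h * p.2, p.2)) ∘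
        (fun p : ℝ × ℝ => (p.1, p.2 + g₁ p.1)) := by
      rw [hTfun]; funext p; simp [Function.comp]
    rw [hTeq, hvol]
    exact comp
end

section
/- Let f : ℝ × ℝ → ℝ be twice continuously differentiable, α ∈ ℝ, and let x : ℝ → ℝ be four times continuously differentiable on a neighborhood of t₀ with x''(t) = f(x(t), t) there. Write x₀ = x(t₀), v₀ = x'(t₀), and for each h set x̄₂(h) = x₀ + h·v₀ + (h²/2)·f(x₀, t₀ + α·h). Then, as h → 0, x̄₂(h) − x(t₀ + h) = [ −(1/6)·v₀·∂₁f(x₀, t₀) + (α/2 − 1/6)·∂₂f(x₀, t₀) ]·h³ + o(h³), where ∂₁f and ∂₂f denote the partial derivatives of f with respect to its first and second argument. -/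
open Asymptotics Filter Set

/-- If `F 0 = 0`, `F` is differentiable near `0` with derivative `F'`, and `F' = o(t^n)`,
then `F = o(t^(n+1))`. -/
private lemma key_step {F F' : ℝ → ℝ} {n : ℕ}
    (hd : ∀ᶠ t in nhds (0:ℝ), HasDerivAt F (F' t) t)
    (h0 : F 0 = 0)
    (ho : F' =o[nhds 0] fun t => t ^ n) :
    F =o[nhds 0] fun t => t ^ (n + 1) := by
  rw [Asymptotics.isLittleO_iff]
  intro ε hε
  obtain ⟨δ, hδ, hH⟩ := Metric.eventually_nhds_iff.1 ((ho.def hε).and hd)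
  refine Metric.eventually_nhds_iff.2 ⟨δ, hδ, ?_⟩
  intro h hh
  rw [Real.dist_eq, sub_zero] at hh
  have hball : ∀ t : ℝ, |t| ≤ |h| → ‖F' t‖ ≤ ε * |h| ^ n ∧ HasDerivAt F (F' t) t := by
    intro t ht
    have H := hH (y := t) (by rw [Real.dist_eq, sub_zero]; exact lt_of_le_of_lt ht hh)
    refine ⟨H.1.trans ?_, H.2⟩
    rw [norm_pow, Real.norm_eq_abs]
    gcongr
  have habs : ‖(h:ℝ) ^ (n+1)‖ = |h| ^ n * |h| := by
    rw [norm_pow, Real.norm_eq_abs, pow_succ]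
  rcases le_total 0 h with hh0 | hh0
  · have hmem : ∀ t ∈ Icc (0:ℝ) h, |t| ≤ |h| := by
      intro t ht
      rw [abs_of_nonneg ht.1, abs_of_nonneg hh0]; exact ht.2
    have hb := norm_image_sub_le_of_norm_deriv_le_segment'
      (f := F) (f' := F') (a := 0) (b := h) (C := ε * |h| ^ n)
      (fun t ht => (hball t (hmem t ht)).2.hasDerivWithinAt)
      (fun t ht => (hball t (hmem t (Ico_subset_Icc_self ht))).1)
      h (right_mem_Icc.2 hh0)
    rw [h0, sub_zero, sub_zero] at hb
    calc ‖F h‖ ≤ ε * |h| ^ n * h := hb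
      _ = ε * ‖h ^ (n+1)‖ := by rw [habs, abs_of_nonneg hh0]; ring
  · have hmem : ∀ t ∈ Icc h (0:ℝ), |t| ≤ |h| := by
      intro t ht
      rw [abs_of_nonpos ht.2, abs_of_nonpos hh0]
      exact neg_le_neg ht.1
    have hb := norm_image_sub_le_of_norm_deriv_le_segment'
      (f := F) (f' := F') (a := h) (b := 0) (C := ε * |h| ^ n)
      (fun t ht => (hball t (hmem t ht)).2.hasDerivWithinAt)
      (fun t ht => (hball t (hmem t (Ico_subset_Icc_self ht))).1)
      0 (right_mem_Icc.2 hh0)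
    rw [h0] at hb
    rw [zero_sub, norm_neg] at hb
    calc ‖F h‖ ≤ ε * |h| ^ n * (0 - h) := hb
      _ = ε * ‖h ^ (n+1)‖ := by rw [habs, abs_of_nonpos hh0]; ring

/-- Local position error of method (4.1): with
`x̄₂(h) = x₀ + h·v₀ + (h²/2)·f(x₀, t₀ + α·h)`,
`x̄₂(h) − x(t₀ + h) = [−(1/6)·v₀·∂₁f + (α/2 − 1/6)·∂₂f]·h³ + o(h³)`,
the partial derivatives being evaluated at `(x₀, t₀)`. -/
theorem deVogelaere_method_4_1_position_error
    (f : ℝ × ℝ → ℝ) (hf : ContDiff ℝ 2 f) (α t₀ : ℝ)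
    (x : ℝ → ℝ) (s : Set ℝ) (hs : s ∈ nhds t₀)
    (hx : ContDiffOn ℝ 4 x s)
    (hode : ∀ t ∈ s, deriv (deriv x) t = f (x t, t)) :
    (fun h : ℝ =>
        (x t₀ + h * deriv x t₀ + h ^ 2 / 2 * f (x t₀, t₀ + α * h)) - x (t₀ + h)
          - (-(1 / 6) * deriv x t₀ * deriv (fun u => f (u, t₀)) (x t₀)
              + (α / 2 - 1 / 6) * deriv (fun t => f (x t₀, t)) t₀) * h ^ 3)
      =o[nhds 0] fun h : ℝ => h ^ 3 := by
  have ht₀s : t₀ ∈ s := mem_of_mem_nhds hs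
  set U := interior s with hUdef
  have hUo : IsOpen U := isOpen_interior
  have ht₀U : t₀ ∈ U := mem_interior_iff_mem_nhds.2 hs
  have hxU : ContDiffOn ℝ 4 x U := hx.mono interior_subset
  have hUn : U ∈ nhds t₀ := hUo.mem_nhds ht₀U
  -- abbreviations
  set v₀ := deriv x t₀ with hv₀
  set a₂ := f (x t₀, t₀) with ha₂
  -- smoothness of derivatives of x on U
  have hx1 : ContDiffOn ℝ 3 (deriv x) U := hxU.deriv_of_isOpen hUo (by norm_num)
  have hdx : ∀ t ∈ U, HasDerivAt x (deriv x t) t := fun t ht =>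
    ((hxU.differentiableOn (by norm_num)).differentiableAt (hUo.mem_nhds ht)).hasDerivAt
  have hdx1 : ∀ t ∈ U, HasDerivAt (deriv x) (deriv (deriv x) t) t := fun t ht =>
    ((hx1.differentiableOn (by norm_num)).differentiableAt (hUo.mem_nhds ht)).hasDerivAt
  -- the derivative of f at (x t₀, t₀)
  set L := fderiv ℝ f (x t₀, t₀) with hLdef
  have hLf : HasFDerivAt f L (x t₀, t₀) :=
    ((hf.differentiable (by norm_num)) (x t₀, t₀)).hasFDerivAt
  set p1 := L (1, 0) with hp1
  set p2 := L (0, 1) with hp2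
  have hder1 : deriv (fun u => f (u, t₀)) (x t₀) = p1 := by
    have h₁ : HasDerivAt (fun u : ℝ => (u, t₀)) ((1 : ℝ), (0 : ℝ)) (x t₀) :=
      (hasDerivAt_id (x t₀)).prodMk (hasDerivAt_const _ t₀)
    have := hLf.comp_hasDerivAt_of_eq (x t₀) h₁ rfl
    exact (by exact this : HasDerivAt (fun u : ℝ => f (u, t₀)) (L (1, 0)) (x t₀)).deriv
  have hder2 : deriv (fun t => f (x t₀, t)) t₀ = p2 := by
    have h₁ : HasDerivAt (fun t : ℝ => (x t₀, t)) ((0 : ℝ), (1 : ℝ)) t₀ :=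
      (hasDerivAt_const _ _).prodMk (hasDerivAt_id t₀)
    have := hLf.comp_hasDerivAt_of_eq t₀ h₁ rfl
    exact (by exact this : HasDerivAt (fun t : ℝ => f (x t₀, t)) (L (0, 1)) t₀).deriv
  set a₃ := v₀ * p1 + p2 with ha₃
  -- the third derivative of x at t₀
  have hxx'' : HasDerivAt (deriv (deriv x)) a₃ t₀ := by
    have hγ : HasDerivAt (fun t : ℝ => (x t, t)) ((v₀, (1 : ℝ))) t₀ :=
      (hdx t₀ ht₀U).prodMk (hasDerivAt_id t₀)
    have hg : HasDerivAt (fun t => f (x t, t)) (L (v₀, 1)) t₀ := by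
      have := hLf.comp_hasDerivAt_of_eq t₀ hγ rfl
      exact this
    have hLv : L (v₀, 1) = a₃ := by
      have hsum : ((v₀ : ℝ), (1 : ℝ)) = v₀ • ((1 : ℝ), (0 : ℝ)) + ((0 : ℝ), (1 : ℝ)) := by
        simp [Prod.ext_iff]
      rw [hsum, map_add, map_smul, ha₃, hp1, hp2]
      simp [smul_eq_mul]
    rw [hLv] at hg
    refine hg.congr_of_eventuallyEq ?_
    exact eventually_of_mem hs fun t ht => hode t ht
  -- second error function E₂ = o(h)
  have hE₂ : (fun h : ℝ => deriv (deriv x) (t₀ + h) - a₂ - a₃ * h)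
      =o[nhds 0] fun h : ℝ => h ^ 1 := by
    have h1 : HasDerivAt (fun h : ℝ => deriv (deriv x) (t₀ + h)) a₃ 0 := by
      have haff : HasDerivAt (fun h : ℝ => t₀ + h) 1 0 := (hasDerivAt_id 0).const_add t₀
      have := HasDerivAt.comp_of_eq (h := fun h : ℝ => t₀ + h) 0 hxx'' haff (by ring)
      exact this.congr_deriv (mul_one _)
    have := hasDerivAt_iff_isLittleO.1 h1
    refine this.congr (fun h => ?_) (fun h => by ring)
    have hdd : deriv (deriv x) (t₀ + 0) = a₂ := by
      rw [add_zero]; exact hode t₀ ht₀s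
    rw [hdd]
    ring_nf
  -- eventually t₀ + h ∈ U
  have hmemU : ∀ᶠ h : ℝ in nhds 0, t₀ + h ∈ U := by
    have htend : Tendsto (fun h : ℝ => t₀ + h) (nhds 0) (nhds t₀) := by
      have hc : Continuous fun h : ℝ => t₀ + h := by continuity
      simpa using hc.tendsto 0
    exact htend.eventually_mem hUn
  -- first error function E₁ = o(h²)
  have hE₁ : (fun h : ℝ => deriv x (t₀ + h) - v₀ - a₂ * h - a₃ * h ^ 2 / 2)
      =o[nhds 0] fun h : ℝ => h ^ 2 := by
    refine key_step ?_ (by simp [hv₀]) hE₂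
    filter_upwards [hmemU] with h hh
    have h1 : HasDerivAt (fun y : ℝ => deriv x (t₀ + y)) (deriv (deriv x) (t₀ + h)) h := by
      have haff : HasDerivAt (fun y : ℝ => t₀ + y) 1 h := (hasDerivAt_id h).const_add t₀
      have := HasDerivAt.comp_of_eq (h := fun y : ℝ => t₀ + y) h (hdx1 _ hh) haff rfl
      exact this.congr_deriv (mul_one _)
    have h2 : HasDerivAt (fun y : ℝ => v₀ + a₂ * y + a₃ * y ^ 2 / 2) (a₂ + a₃ * h) h := by
      have := (((hasDerivAt_id h).const_mul a₂).const_add v₀).add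
        (((hasDerivAt_pow 2 h).const_mul a₃).div_const 2)
      exact this.congr_deriv (by push_cast; ring)
    have := h1.sub h2
    exact (this.congr_deriv (by ring)).congr_of_eventuallyEq (Eventually.of_forall fun y => by simp only [Pi.sub_apply]; ring)
  -- zeroth error function E = o(h³)
  have hE : (fun h : ℝ => x (t₀ + h) - x t₀ - v₀ * h - a₂ * h ^ 2 / 2 - a₃ * h ^ 3 / 6)
      =o[nhds 0] fun h : ℝ => h ^ 3 := by
    refine key_step ?_ (by simp) hE₁
    filter_upwards [hmemU] with h hh
    have h1 : HasDerivAt (fun y : ℝ => x (t₀ + y)) (deriv x (t₀ + h)) h := by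
      have haff : HasDerivAt (fun y : ℝ => t₀ + y) 1 h := (hasDerivAt_id h).const_add t₀
      have := HasDerivAt.comp_of_eq (h := fun y : ℝ => t₀ + y) h (hdx _ hh) haff rfl
      exact this.congr_deriv (mul_one _)
    have h2 : HasDerivAt
        (fun y : ℝ => x t₀ + v₀ * y + a₂ * y ^ 2 / 2 + a₃ * y ^ 3 / 6)
        (v₀ + a₂ * h + a₃ * h ^ 2 / 2) h := by
      have := ((((hasDerivAt_id h).const_mul v₀).const_add (x t₀)).add
        (((hasDerivAt_pow 2 h).const_mul a₂).div_const 2)).add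
        (((hasDerivAt_pow 3 h).const_mul a₃).div_const 6)
      exact this.congr_deriv (by push_cast; ring)
    have := h1.sub h2
    exact (this.congr_deriv (by ring)).congr_of_eventuallyEq (Eventually.of_forall fun y => by simp only [Pi.sub_apply]; ring)
  -- the midpoint-evaluation error ψ = o(h)
  have hψ : (fun h : ℝ => f (x t₀, t₀ + α * h) - a₂ - α * p2 * h)
      =o[nhds 0] fun h : ℝ => h := by
    have hγ : HasDerivAt (fun h : ℝ => ((x t₀ : ℝ), t₀ + α * h)) ((0 : ℝ), α) 0 := by
      refine (hasDerivAt_const _ _).prodMk ?_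
      have := ((hasDerivAt_id (0 : ℝ)).const_mul α).const_add t₀
      simpa using this
    have hφ : HasDerivAt (fun h : ℝ => f (x t₀, t₀ + α * h)) (α * p2) 0 := by
      have := hLf.comp_hasDerivAt_of_eq 0 hγ (by norm_num)
      have : HasDerivAt (fun h : ℝ => f (x t₀, t₀ + α * h)) (L ((0:ℝ), α)) 0 := by
        exact this
      have hLα : L ((0 : ℝ), α) = α * p2 := by
        have hsm : ((0 : ℝ), α) = α • ((0 : ℝ), (1 : ℝ)) := by simp [Prod.ext_iff]
        rw [hsm, map_smul, hp2, smul_eq_mul]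
      rwa [hLα] at this
    have := hasDerivAt_iff_isLittleO.1 hφ
    refine this.congr (fun h => ?_) (fun h => by ring)
    simp only [mul_zero, add_zero, sub_zero, smul_eq_mul]
    rw [← ha₂]
    ring
  -- combine: h²/2 · ψ(h) = o(h³)
  have hψ3 : (fun h : ℝ => h ^ 2 / 2 * (f (x t₀, t₀ + α * h) - a₂ - α * p2 * h))
      =o[nhds 0] fun h : ℝ => h ^ 3 := by
    have h2 : (fun h : ℝ => h ^ 2 / 2) =O[nhds 0] fun h : ℝ => h ^ 2 := by
      have := (isBigO_refl (fun h : ℝ => h ^ 2) (nhds 0)).const_mul_left (1 / 2)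
      exact this.congr_left fun h => by ring
    have := h2.mul_isLittleO hψ
    exact this.congr (fun h => rfl) (fun h => by ring)
  -- final assembly
  have hfinal := hψ3.sub hE
  refine hfinal.congr (fun h => ?_) (fun h => rfl)
  rw [hder1, hder2, ha₃]
  ring
end

section
/- Let f : ℝ × ℝ → ℝ be twice continuously differentiable, α ∈ ℝ, and let x : ℝ → ℝ be four times continuously differentiable on a neighborhood of t₀ with x''(t) = f(x(t), t) there. Write x₀ = x(t₀), v₀ = x'(t₀), and for each h set v̄₁(h) = v₀ + (h/2)·f(x₀, t₀ + α·h), x̄₂(h) = x₀ + h·v̄₁(h), v̄₂(h) = v̄₁(h) + (h/2)·f(x̄₂(h), t₀ + (1 − α)·h). Then, as h → 0, v̄₂(h) − x'(t₀ + h) = [ (1/12)·∂₁₁f·v₀² + (1/6 − α/2)·∂₁₂f·v₀ + ((α² − α)/2 + 1/12)·∂₂₂f + (1/12)·f·∂₁f ]·h³ + o(h³), where all derivatives of f are evaluated at (x₀, t₀) and ∂₁, ∂₂ denote partial derivatives with respect to the first and second argument of f. -/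
open Asymptotics Filter

private lemma step_littleO {ψ ψ' : ℝ → ℝ} {n : ℕ} (h0 : ψ 0 = 0)
    (hd : ∀ᶠ h in nhds (0:ℝ), HasDerivAt ψ (ψ' h) h)
    (ho : ψ' =o[nhds (0:ℝ)] fun h => h ^ n) :
    ψ =o[nhds (0:ℝ)] fun h => h ^ (n + 1) := by
  have hpow : ∀ x : ℝ, x ^ (n + 1) = 0 → ψ x = 0 := by
    intro x hx
    have hx0 : x = 0 := by
      by_contra hne
      exact pow_ne_zero (n + 1) hne hx
    rw [hx0, h0]
  rw [isLittleO_iff_tendsto hpow]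
  have main : Tendsto (fun x => ψ x / x ^ (n + 1))
      (nhdsWithin (0:ℝ) {0}ᶜ ⊔ pure 0) (nhds 0) := by
    rw [tendsto_sup]
    constructor
    · apply HasDerivAt.lhopital_zero_nhdsNE (f' := ψ')
        (g' := fun x : ℝ => ((n:ℝ) + 1) * x ^ n)
      · exact hd.filter_mono nhdsWithin_le_nhds
      · refine Eventually.of_forall fun x => ?_
        simpa using hasDerivAt_pow (n + 1) x
      · filter_upwards [self_mem_nhdsWithin] with x hx
        exact mul_ne_zero (by positivity) (pow_ne_zero n hx)
      · have hc : ContinuousAt ψ 0 := hd.self_of_nhds.differentiableAt.continuousAt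
        have := hc.tendsto
        rw [h0] at this
        exact this.mono_left nhdsWithin_le_nhds
      · have : Tendsto (fun x : ℝ => x ^ (n + 1)) (nhds 0) (nhds 0) := by
          simpa using (continuous_pow (n + 1)).tendsto (0:ℝ)
        exact this.mono_left nhdsWithin_le_nhds
      · have h1 : Tendsto (fun x => ψ' x / x ^ n) (nhdsWithin (0:ℝ) {0}ᶜ) (nhds 0) := by
          have h2 := ho.mono (nhdsWithin_le_nhds : nhdsWithin (0:ℝ) {0}ᶜ ≤ nhds 0)
          rw [isLittleO_iff_tendsto'] at h2
          · exact h2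
          · filter_upwards [self_mem_nhdsWithin] with x hx h'
            exact absurd h' (pow_ne_zero n hx)
        have h3 := h1.div_const ((n:ℝ) + 1)
        simp only [zero_div] at h3
        refine h3.congr fun x => ?_
        rw [div_div, mul_comm]
    · rw [tendsto_pure_left]
      intro u hu
      simpa [h0] using mem_of_mem_nhds hu
  rwa [nhdsNE_sup_pure] at main

private lemma taylor3_littleO {φ d1 d2 d3 : ℝ → ℝ}
    (h1 : ∀ᶠ h in nhds (0:ℝ), HasDerivAt φ (d1 h) h)
    (h2 : ∀ᶠ h in nhds (0:ℝ), HasDerivAt d1 (d2 h) h)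
    (h3 : ∀ᶠ h in nhds (0:ℝ), HasDerivAt d2 (d3 h) h)
    (h3c : ContinuousAt d3 0) :
    (fun h => φ h - φ 0 - d1 0 * h - d2 0 / 2 * h ^ 2 - d3 0 / 6 * h ^ 3)
      =o[nhds (0:ℝ)] fun h => h ^ 3 := by
  have o0 : (fun h => d3 h - d3 0) =o[nhds (0:ℝ)] fun h => h ^ 0 := by
    simp only [pow_zero]
    rw [isLittleO_one_iff]
    simpa using h3c.tendsto.sub (tendsto_const_nhds (x := d3 0))
  have o1 : (fun h => d2 h - d2 0 - d3 0 * h) =o[nhds (0:ℝ)] fun h => h ^ 1 := by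
    apply step_littleO (by simp)
    · filter_upwards [h3] with h hh
      have : HasDerivAt (fun h => d2 h - d2 0 - d3 0 * h) (d3 h - d3 0) h := by
        have := ((hh.sub_const (d2 0)).sub ((hasDerivAt_id h).const_mul (d3 0)))
        exact this.congr_deriv (by ring)
      exact this
    · exact o0
  have o2 : (fun h => d1 h - d1 0 - d2 0 * h - d3 0 / 2 * h ^ 2)
      =o[nhds (0:ℝ)] fun h => h ^ 2 := by
    apply step_littleO (by simp)
    · filter_upwards [h2] with h hh
      have base := ((hh.sub_const (d1 0)).sub ((hasDerivAt_id h).const_mul (d2 0))).sub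
        (((hasDerivAt_pow 2 h).const_mul (d3 0 / 2)))
      have : HasDerivAt (fun h => d1 h - d1 0 - d2 0 * h - d3 0 / 2 * h ^ 2)
          (d2 h - d2 0 - d3 0 * h) h := by
        exact base.congr_deriv (by push_cast; ring)
      exact this
    · exact o1
  apply step_littleO (by simp)
  · filter_upwards [h1] with h hh
    have base := (((hh.sub_const (φ 0)).sub ((hasDerivAt_id h).const_mul (d1 0))).sub
      ((hasDerivAt_pow 2 h).const_mul (d2 0 / 2))).sub
      ((hasDerivAt_pow 3 h).const_mul (d3 0 / 6))
    have : HasDerivAt (fun h => φ h - φ 0 - d1 0 * h - d2 0 / 2 * h ^ 2 - d3 0 / 6 * h ^ 3)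
        (d1 h - d1 0 - d2 0 * h - d3 0 / 2 * h ^ 2) h := by
      exact base.congr_deriv (by push_cast; ring)
    exact this
  · exact o2

private lemma taylor2_littleO {φ d1 d2 : ℝ → ℝ}
    (h1 : ∀ᶠ h in nhds (0:ℝ), HasDerivAt φ (d1 h) h)
    (h2 : ∀ᶠ h in nhds (0:ℝ), HasDerivAt d1 (d2 h) h)
    (h2c : ContinuousAt d2 0) :
    (fun h => φ h - φ 0 - d1 0 * h - d2 0 / 2 * h ^ 2) =o[nhds (0:ℝ)] fun h => h ^ 2 := by
  have o0 : (fun h => d2 h - d2 0) =o[nhds (0:ℝ)] fun h => h ^ 0 := by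
    simp only [pow_zero]
    rw [isLittleO_one_iff]
    simpa using h2c.tendsto.sub (tendsto_const_nhds (x := d2 0))
  have o1 : (fun h => d1 h - d1 0 - d2 0 * h) =o[nhds (0:ℝ)] fun h => h ^ 1 := by
    apply step_littleO (by simp)
    · filter_upwards [h2] with h hh
      have : HasDerivAt (fun h => d1 h - d1 0 - d2 0 * h) (d2 h - d2 0) h := by
        exact ((hh.sub_const (d1 0)).sub ((hasDerivAt_id h).const_mul (d2 0))).congr_deriv (by ring)
      exact this
    · exact o0
  apply step_littleO (by simp)
  · filter_upwards [h1] with h hh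
    have base := ((hh.sub_const (φ 0)).sub ((hasDerivAt_id h).const_mul (d1 0))).sub
      ((hasDerivAt_pow 2 h).const_mul (d2 0 / 2))
    have : HasDerivAt (fun h => φ h - φ 0 - d1 0 * h - d2 0 / 2 * h ^ 2)
        (d1 h - d1 0 - d2 0 * h) h := by
      exact base.congr_deriv (by push_cast; ring)
    exact this
  · exact o1

private lemma hasDerivAt_comp2 {g : ℝ × ℝ → ℝ} {a b : ℝ → ℝ} {a' b' t : ℝ}
    (hg : DifferentiableAt ℝ g (a t, b t)) (ha : HasDerivAt a a' t) (hb : HasDerivAt b b' t) :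
    HasDerivAt (fun u => g (a u, b u))
      (a' * fderiv ℝ g (a t, b t) (1, 0) + b' * fderiv ℝ g (a t, b t) (0, 1)) t := by
  have H := hg.hasFDerivAt.comp_hasDerivAt t (ha.prodMk hb)
  refine H.congr_deriv ?_
  have hv : ((a', b') : ℝ × ℝ) = a' • ((1:ℝ), (0:ℝ)) + b' • ((0:ℝ), (1:ℝ)) := by
    simp [Prod.ext_iff]
  rw [hv, map_add, map_smul, map_smul, smul_eq_mul, smul_eq_mul]

private lemma cont_fderiv_apply {g : ℝ × ℝ → ℝ} (hg : ContDiff ℝ 1 g) (v : ℝ × ℝ) :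
    Continuous fun p => fderiv ℝ g p v :=
  (ContinuousLinearMap.apply ℝ ℝ v).continuous.comp (hg.continuous_fderiv one_ne_zero)

private noncomputable def pd1 (f : ℝ × ℝ → ℝ) : ℝ × ℝ → ℝ := fun p => fderiv ℝ f p (1, 0)
private noncomputable def pd2 (f : ℝ × ℝ → ℝ) : ℝ × ℝ → ℝ := fun p => fderiv ℝ f p (0, 1)

private lemma pd1_contDiff {f : ℝ × ℝ → ℝ} (hf : ContDiff ℝ 2 f) : ContDiff ℝ 1 (pd1 f) :=
  (hf.fderiv_right (by norm_num)).clm_apply contDiff_const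

private lemma pd2_contDiff {f : ℝ × ℝ → ℝ} (hf : ContDiff ℝ 2 f) : ContDiff ℝ 1 (pd2 f) :=
  (hf.fderiv_right (by norm_num)).clm_apply contDiff_const

private lemma pd_cont {g : ℝ × ℝ → ℝ} (hg : ContDiff ℝ 1 g) (v : ℝ × ℝ) :
    Continuous fun p => fderiv ℝ g p v :=
  (ContinuousLinearMap.apply ℝ ℝ v).continuous.comp (hg.continuous_fderiv one_ne_zero)

private lemma pd1_cont {g : ℝ × ℝ → ℝ} (hg : ContDiff ℝ 1 g) : Continuous (pd1 g) :=
  pd_cont hg (1, 0)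

private lemma pd2_cont {g : ℝ × ℝ → ℝ} (hg : ContDiff ℝ 1 g) : Continuous (pd2 g) :=
  pd_cont hg (0, 1)

private lemma pd1_diff {f : ℝ × ℝ → ℝ} (hf : ContDiff ℝ 2 f) : Differentiable ℝ (pd1 f) :=
  (pd1_contDiff hf).differentiable one_ne_zero

private lemma pd2_diff {f : ℝ × ℝ → ℝ} (hf : ContDiff ℝ 2 f) : Differentiable ℝ (pd2 f) :=
  (pd2_contDiff hf).differentiable one_ne_zero

private lemma hasDerivAt_comp2' (g : ℝ × ℝ → ℝ) (a b : ℝ → ℝ) {a' b' t : ℝ}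
    (hg : DifferentiableAt ℝ g (a t, b t)) (ha : HasDerivAt a a' t) (hb : HasDerivAt b b' t) :
    HasDerivAt (fun u => g (a u, b u))
      (a' * pd1 g (a t, b t) + b' * pd2 g (a t, b t)) t := by
  have H := hg.hasFDerivAt.comp_hasDerivAt t (ha.prodMk hb)
  refine H.congr_deriv ?_
  have hv : ((a', b') : ℝ × ℝ) = a' • ((1:ℝ), (0:ℝ)) + b' • ((0:ℝ), (1:ℝ)) := by
    simp [Prod.ext_iff]
  rw [hv, map_add, map_smul, map_smul, smul_eq_mul, smul_eq_mul]
  rfl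

private lemma HasDerivAt.congr_d {f : ℝ → ℝ} {a b x : ℝ} (h : HasDerivAt f a x) (e : a = b) :
    HasDerivAt f b x := e ▸ h

private lemma deriv_comp_fst {f : ℝ × ℝ → ℝ} (hfd : Differentiable ℝ f) (a b : ℝ) :
    deriv (fun u => f (u, b)) a = pd1 f (a, b) := by
  have := (hasDerivAt_comp2' f (fun u => u) (fun _ => b) (hfd (a, b))
    (hasDerivAt_id a) (hasDerivAt_const a b)).deriv
  simpa using this

private lemma deriv_comp_snd {f : ℝ × ℝ → ℝ} (hfd : Differentiable ℝ f) (a b : ℝ) :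
    deriv (fun t' => f (a, t')) b = pd2 f (a, b) := by
  have := (hasDerivAt_comp2' f (fun _ => a) (fun u => u) (hfd (a, b))
    (hasDerivAt_const b a) (hasDerivAt_id b)).deriv
  simpa using this

private lemma pd_symm {f : ℝ × ℝ → ℝ} (hf : ContDiff ℝ 2 f) (p : ℝ × ℝ) :
    pd2 (pd1 f) p = pd1 (pd2 f) p := by
  have hfd : Differentiable ℝ f := hf.differentiable two_ne_zero
  have hf1 : ContDiff ℝ 1 (fderiv ℝ f) := hf.fderiv_right (by norm_num)
  have hF : DifferentiableAt ℝ (fderiv ℝ f) p := (hf1.differentiable one_ne_zero) p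
  have hsec := second_derivative_symmetric (f := f) (f' := fderiv ℝ f)
    (f'' := fderiv ℝ (fderiv ℝ f) p) (fun y => (hfd y).hasFDerivAt) hF.hasFDerivAt
    ((0:ℝ), (1:ℝ)) ((1:ℝ), (0:ℝ))
  have e1 : fderiv ℝ (pd1 f) p = (fderiv ℝ (fderiv ℝ f) p).flip (1, 0) := by
    have := fderiv_clm_apply (𝕜 := ℝ) (c := fderiv ℝ f) (u := fun _ => ((1:ℝ), (0:ℝ)))
      hF (differentiableAt_const _)
    rw [show pd1 f = fun y => fderiv ℝ f y (1, 0) from rfl]; simpa using this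
  have e2 : fderiv ℝ (pd2 f) p = (fderiv ℝ (fderiv ℝ f) p).flip (0, 1) := by
    have := fderiv_clm_apply (𝕜 := ℝ) (c := fderiv ℝ f) (u := fun _ => ((0:ℝ), (1:ℝ)))
      hF (differentiableAt_const _)
    rw [show pd2 f = fun y => fderiv ℝ f y (0, 1) from rfl]; simpa using this
  show fderiv ℝ (pd1 f) p (0, 1) = fderiv ℝ (pd2 f) p (1, 0)
  rw [e1, e2]
  simpa [ContinuousLinearMap.flip_apply] using hsec

/-- Local velocity error of method (4.1): with
`v̄₁(h) = v₀ + (h/2)·f(x₀, t₀ + α·h)`, `x̄₂(h) = x₀ + h·v̄₁(h)`,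
`v̄₂(h) = v̄₁(h) + (h/2)·f(x̄₂(h), t₀ + (1 − α)·h)`, one has
`v̄₂(h) − x'(t₀ + h) = [(1/12)·∂₁₁f·v₀² + (1/6 − α/2)·∂₁₂f·v₀
  + ((α² − α)/2 + 1/12)·∂₂₂f + (1/12)·f·∂₁f]·h³ + o(h³)`,
all derivatives of `f` evaluated at `(x₀, t₀)`. -/
theorem deVogelaere_method_4_1_velocity_error
    (f : ℝ × ℝ → ℝ) (hf : ContDiff ℝ 2 f) (α t₀ : ℝ)
    (x : ℝ → ℝ) (s : Set ℝ) (hs : s ∈ nhds t₀)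
    (hx : ContDiffOn ℝ 4 x s)
    (hode : ∀ t ∈ s, deriv (deriv x) t = f (x t, t))
    (v₁ x₂ v₂ : ℝ → ℝ)
    (hv₁ : ∀ h : ℝ, v₁ h = deriv x t₀ + h / 2 * f (x t₀, t₀ + α * h))
    (hx₂ : ∀ h : ℝ, x₂ h = x t₀ + h * v₁ h)
    (hv₂ : ∀ h : ℝ, v₂ h = v₁ h + h / 2 * f (x₂ h, t₀ + (1 - α) * h)) :
    (fun h : ℝ =>
        v₂ h - deriv x (t₀ + h)
          - ((1 / 12) * deriv (fun u => deriv (fun u' => f (u', t₀)) u) (x t₀)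
                * (deriv x t₀) ^ 2
              + (1 / 6 - α / 2) * deriv (fun t => deriv (fun u => f (u, t)) (x t₀)) t₀
                * deriv x t₀
              + ((α ^ 2 - α) / 2 + 1 / 12)
                * deriv (fun t => deriv (fun t' => f (x t₀, t')) t) t₀
              + (1 / 12) * f (x t₀, t₀) * deriv (fun u => f (u, t₀)) (x t₀)) * h ^ 3)
      =o[nhds 0] fun h : ℝ => h ^ 3 := by
  have hfd : Differentiable ℝ f := hf.differentiable two_ne_zero
  have hfC : Continuous f := hf.continuous
  have hf2 : ContDiff ℝ 1 f := hf.of_le one_le_two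
  have hp1C : Continuous (pd1 f) := pd1_cont hf2
  have hp2C : Continuous (pd2 f) := pd2_cont hf2
  have hp11C : Continuous (pd1 (pd1 f)) := pd1_cont (pd1_contDiff hf)
  have hp12C : Continuous (pd2 (pd1 f)) := pd2_cont (pd1_contDiff hf)
  have hp21C : Continuous (pd1 (pd2 f)) := pd1_cont (pd2_contDiff hf)
  have hp22C : Continuous (pd2 (pd2 f)) := pd2_cont (pd2_contDiff hf)
  have hp1D : Differentiable ℝ (pd1 f) := pd1_diff hf
  have hp2D : Differentiable ℝ (pd2 f) := pd2_diff hf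
  -- rewrite the four derivative expressions in the statement
  have hQA : deriv (fun u => deriv (fun u' => f (u', t₀)) u) (x t₀)
      = pd1 (pd1 f) (x t₀, t₀) := by
    have e : (fun u => deriv (fun u' => f (u', t₀)) u) = fun u => pd1 f (u, t₀) :=
      funext fun u => deriv_comp_fst hfd u t₀
    rw [e, deriv_comp_fst hp1D (x t₀) t₀]
  have hQB : deriv (fun t => deriv (fun u => f (u, t)) (x t₀)) t₀
      = pd2 (pd1 f) (x t₀, t₀) := by
    have e : (fun t => deriv (fun u => f (u, t)) (x t₀)) = fun t => pd1 f (x t₀, t) :=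
      funext fun t => deriv_comp_fst hfd (x t₀) t
    rw [e, deriv_comp_snd hp1D (x t₀) t₀]
  have hQC : deriv (fun t => deriv (fun t' => f (x t₀, t')) t) t₀
      = pd2 (pd2 f) (x t₀, t₀) := by
    have e : (fun t => deriv (fun t' => f (x t₀, t')) t) = fun t => pd2 f (x t₀, t) :=
      funext fun t => deriv_comp_snd hfd (x t₀) t
    rw [e, deriv_comp_snd hp2D (x t₀) t₀]
  have hQD : deriv (fun u => f (u, t₀)) (x t₀) = pd1 f (x t₀, t₀) :=
    deriv_comp_fst hfd (x t₀) t₀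
  have hsymm : pd2 (pd1 f) (x t₀, t₀) = pd1 (pd2 f) (x t₀, t₀) := pd_symm hf _
  -- neighborhood setup
  obtain ⟨U, hUs, hUopen, ht₀U⟩ := mem_nhds_iff.mp hs
  have hxU : ContDiffOn ℝ 4 x U := hx.mono hUs
  have hyU : ContDiffOn ℝ 3 (deriv x) U := hxU.deriv_of_isOpen hUopen (by norm_num)
  have hxdiff : ∀ t ∈ U, HasDerivAt x (deriv x t) t := fun t ht =>
    ((hxU.contDiffAt (hUopen.mem_nhds ht)).differentiableAt (by norm_num)).hasDerivAt
  have hydiff : ∀ t ∈ U, HasDerivAt (deriv x) (f (x t, t)) t := fun t ht => by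
    have hdy := ((hyU.contDiffAt (hUopen.mem_nhds ht)).differentiableAt (by norm_num)).hasDerivAt
    rwa [hode t (hUs ht)] at hdy
  have hshift : ∀ r : ℝ, HasDerivAt (fun u : ℝ => t₀ + u) 1 r := fun r => by
    simpa using (hasDerivAt_id r).const_add t₀
  have hUev : ∀ᶠ r in nhds (0:ℝ), t₀ + r ∈ U := by
    have htend : Tendsto (fun r : ℝ => t₀ + r) (nhds 0) (nhds t₀) := by
      exact (continuous_const.add continuous_id).tendsto' (0:ℝ) t₀ (by simp)
    exact htend.eventually (hUopen.eventually_mem ht₀U)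
  -- ODE-side expansion functions
  set c1 : ℝ → ℝ × ℝ := fun r => (x (t₀ + r), t₀ + r) with Ec1
  set w1 : ℝ → ℝ := fun r => f (c1 r) with Ew1
  set w2 : ℝ → ℝ := fun r => deriv x (t₀ + r) * pd1 f (c1 r) + pd2 f (c1 r) with Ew2
  set w3 : ℝ → ℝ := fun r =>
      (deriv x (t₀ + r) * pd1 (pd1 f) (c1 r) + pd2 (pd1 f) (c1 r)) * deriv x (t₀ + r)
        + pd1 f (c1 r) * f (c1 r)
        + (deriv x (t₀ + r) * pd1 (pd2 f) (c1 r) + pd2 (pd2 f) (c1 r)) with Ew3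
  have E1 : ∀ᶠ r in nhds (0:ℝ), HasDerivAt (fun u => deriv x (t₀ + u)) (w1 r) r := by
    filter_upwards [hUev] with r hr
    simp only [Ew1, Ec1]
    exact ((hydiff _ hr).comp r (hshift r)).congr_d (by ring)
  have E2 : ∀ᶠ r in nhds (0:ℝ), HasDerivAt w1 (w2 r) r := by
    filter_upwards [hUev] with r hr
    have hxc : HasDerivAt (fun u => x (t₀ + u)) (deriv x (t₀ + r) * 1) r :=
      (hxdiff _ hr).comp r (hshift r)
    simp only [Ew1, Ew2, Ec1]
    exact (hasDerivAt_comp2' f (fun u => x (t₀ + u)) (fun u => t₀ + u) (hfd _) hxc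
      (hshift r)).congr_d (by ring)
  have E3 : ∀ᶠ r in nhds (0:ℝ), HasDerivAt w2 (w3 r) r := by
    filter_upwards [hUev] with r hr
    have hxc : HasDerivAt (fun u => x (t₀ + u)) (deriv x (t₀ + r) * 1) r :=
      (hxdiff _ hr).comp r (hshift r)
    have hyc : HasDerivAt (fun u => deriv x (t₀ + u)) (f (x (t₀ + r), t₀ + r) * 1) r :=
      (hydiff _ hr).comp r (hshift r)
    have hp1comp := hasDerivAt_comp2' (pd1 f) (fun u => x (t₀ + u)) (fun u => t₀ + u)
      (hp1D _) hxc (hshift r)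
    have hp2comp := hasDerivAt_comp2' (pd2 f) (fun u => x (t₀ + u)) (fun u => t₀ + u)
      (hp2D _) hxc (hshift r)
    simp only [Ew2, Ew3, Ec1]
    exact ((hyc.mul hp1comp).add hp2comp).congr_d (by ring)
  have hshiftC : ContinuousAt (fun raw : ℝ => t₀ + raw) 0 :=
    (continuous_const.add continuous_id).continuousAt
  have hxCA : ContinuousAt (fun r : ℝ => x (t₀ + r)) 0 := by
    have h1 : ContinuousAt x (t₀ + 0) := by
      rw [add_zero]; exact (hxdiff t₀ ht₀U).differentiableAt.continuousAt
    exact h1.comp hshiftC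
  have hyCA : ContinuousAt (fun r : ℝ => deriv x (t₀ + r)) 0 := by
    have h1 : ContinuousAt (deriv x) (t₀ + 0) := by
      rw [add_zero]; exact (hydiff t₀ ht₀U).differentiableAt.continuousAt
    exact h1.comp hshiftC
  have hc1CA : ContinuousAt c1 0 := by
    rw [Ec1]; exact hxCA.prodMk hshiftC
  have E3c : ContinuousAt w3 0 := by
    rw [Ew3]
    exact ((((hyCA.mul (hp11C.continuousAt.comp hc1CA)).add
        (hp12C.continuousAt.comp hc1CA)).mul hyCA).add
      ((hp1C.continuousAt.comp hc1CA).mul (hfC.continuousAt.comp hc1CA))).add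
      ((hyCA.mul (hp21C.continuousAt.comp hc1CA)).add (hp22C.continuousAt.comp hc1CA))
  have EYo := taylor3_littleO E1 E2 E3 E3c
  -- method-side expansion functions
  set g1 : ℝ → ℝ := fun r => f (x t₀, t₀ + α * r) with Eg1
  set g1d : ℝ → ℝ := fun r => α * pd2 f (x t₀, t₀ + α * r) with Eg1d
  set g1dd : ℝ → ℝ := fun r => α ^ 2 * pd2 (pd2 f) (x t₀, t₀ + α * r) with Eg1dd
  set X : ℝ → ℝ := fun r => x t₀ + r * deriv x t₀ + r ^ 2 / 2 * g1 r with EX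
  set X1 : ℝ → ℝ := fun r => deriv x t₀ + r * g1 r + r ^ 2 / 2 * g1d r with EX1
  set X2 : ℝ → ℝ := fun r => g1 r + 2 * r * g1d r + r ^ 2 / 2 * g1dd r with EX2
  set c2 : ℝ → ℝ × ℝ := fun r => (X r, t₀ + (1 - α) * r) with Ec2
  set g2 : ℝ → ℝ := fun r => f (c2 r) with Eg2
  set g2d : ℝ → ℝ := fun r => X1 r * pd1 f (c2 r) + (1 - α) * pd2 f (c2 r) with Eg2d
  set g2dd : ℝ → ℝ := fun r =>
      X2 r * pd1 f (c2 r)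
        + X1 r * (X1 r * pd1 (pd1 f) (c2 r) + (1 - α) * pd2 (pd1 f) (c2 r))
        + (1 - α) * (X1 r * pd1 (pd2 f) (c2 r) + (1 - α) * pd2 (pd2 f) (c2 r)) with Eg2dd
  have hb1d : ∀ r : ℝ, HasDerivAt (fun u => t₀ + α * u) α r := fun r => by
    simpa using ((hasDerivAt_id r).const_mul α).const_add t₀
  have hb2d : ∀ r : ℝ, HasDerivAt (fun u => t₀ + (1 - α) * u) (1 - α) r := fun r => by
    simpa using ((hasDerivAt_id r).const_mul (1 - α)).const_add t₀
  have Hg1 : ∀ r, HasDerivAt g1 (g1d r) r := fun r => by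
    simp only [Eg1, Eg1d]
    exact (hasDerivAt_comp2' f (fun _ => x t₀) (fun u => t₀ + α * u) (hfd _)
      (hasDerivAt_const r (x t₀)) (hb1d r)).congr_d (by ring)
  have Hg1d : ∀ r, HasDerivAt g1d (g1dd r) r := fun r => by
    simp only [Eg1d, Eg1dd]
    exact ((hasDerivAt_comp2' (pd2 f) (fun _ => x t₀) (fun u => t₀ + α * u) (hp2D _)
      (hasDerivAt_const r (x t₀)) (hb1d r)).const_mul α).congr_d (by ring)
  have HX : ∀ r, HasDerivAt X (X1 r) r := fun r => by
    simp only [EX, EX1]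
    exact (((hasDerivAt_const r (x t₀)).add ((hasDerivAt_id r).mul_const (deriv x t₀))).add
      (((hasDerivAt_pow 2 r).div_const 2).mul (Hg1 r))).congr_d (by push_cast; ring)
  have HX1 : ∀ r, HasDerivAt X1 (X2 r) r := fun r => by
    simp only [EX1, EX2]
    exact (((hasDerivAt_const r (deriv x t₀)).add ((hasDerivAt_id r).mul (Hg1 r))).add
      (((hasDerivAt_pow 2 r).div_const 2).mul (Hg1d r))).congr_d
      (by simp only [id_eq]; push_cast; ring)
  have Hg2 : ∀ r, HasDerivAt g2 (g2d r) r := fun r => by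
    simp only [Eg2, Eg2d, Ec2]
    exact (hasDerivAt_comp2' f X (fun u => t₀ + (1 - α) * u) (hfd _) (HX r) (hb2d r)).congr_d
      (by ring)
  have Hg2d : ∀ r, HasDerivAt g2d (g2dd r) r := fun r => by
    simp only [Eg2d, Eg2dd, Ec2]
    have hp1comp := hasDerivAt_comp2' (pd1 f) X (fun u => t₀ + (1 - α) * u) (hp1D _)
      (HX r) (hb2d r)
    have hp2comp := hasDerivAt_comp2' (pd2 f) X (fun u => t₀ + (1 - α) * u) (hp2D _)
      (HX r) (hb2d r)
    exact (((HX1 r).mul hp1comp).add (hp2comp.const_mul (1 - α))).congr_d (by ring)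
  -- continuity of the second derivative of the method side
  have hcurve1C : Continuous (fun r : ℝ => ((x t₀ : ℝ), t₀ + α * r)) :=
    continuous_const.prodMk (continuous_const.add (continuous_const.mul continuous_id))
  have cg1 : Continuous g1 := by rw [Eg1]; exact hfC.comp hcurve1C
  have cg1d : Continuous g1d := by rw [Eg1d]; exact continuous_const.mul (hp2C.comp hcurve1C)
  have cg1dd : Continuous g1dd := by rw [Eg1dd]; exact continuous_const.mul (hp22C.comp hcurve1C)
  have cX : Continuous X := by
    rw [EX]
    exact (continuous_const.add (continuous_id.mul continuous_const)).add
      (((continuous_pow 2).div_const 2).mul cg1)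
  have cX1 : Continuous X1 := by
    rw [EX1]
    exact (continuous_const.add (continuous_id.mul cg1)).add
      (((continuous_pow 2).div_const 2).mul cg1d)
  have cX2 : Continuous X2 := by
    rw [EX2]
    exact (cg1.add ((continuous_const.mul continuous_id).mul cg1d)).add
      (((continuous_pow 2).div_const 2).mul cg1dd)
  have hcurve2C : Continuous c2 := by
    rw [Ec2]
    exact cX.prodMk (continuous_const.add (continuous_const.mul continuous_id))
  have cg2dd : Continuous g2dd := by
    rw [Eg2dd]
    exact ((cX2.mul (hp1C.comp hcurve2C)).add
        (cX1.mul ((cX1.mul (hp11C.comp hcurve2C)).add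
          (continuous_const.mul (hp12C.comp hcurve2C))))).add
      (continuous_const.mul ((cX1.mul (hp21C.comp hcurve2C)).add
        (continuous_const.mul (hp22C.comp hcurve2C))))
  have EM1 : ∀ᶠ r in nhds (0:ℝ), HasDerivAt (fun u => g1 u + g2 u) (g1d r + g2d r) r :=
    Eventually.of_forall fun r => (Hg1 r).add (Hg2 r)
  have EM2 : ∀ᶠ r in nhds (0:ℝ), HasDerivAt (fun u => g1d u + g2d u) (g1dd r + g2dd r) r :=
    Eventually.of_forall fun r => (Hg1d r).add (Hg2d r)
  have EM2c : ContinuousAt (fun u => g1dd u + g2dd u) 0 := (cg1dd.add cg2dd).continuousAt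
  have EGo := taylor2_littleO EM1 EM2 EM2c
  have hX2eq : ∀ r, x₂ r = X r := fun r => by
    rw [hx₂ r, hv₁ r]; simp only [EX, Eg1]; ring
  have hbig : (fun r : ℝ => r / 2) =O[nhds (0:ℝ)] fun r => r :=
    ((isBigO_refl (fun r : ℝ => r) (nhds 0)).const_mul_left (1/2)).congr_left fun r => by ring
  have part1 := hbig.mul_isLittleO EGo
  have final := (part1.congr (fun r => rfl) (fun r => (by ring : r * r ^ 2 = r ^ 3))).sub EYo
  refine final.congr (fun h => ?_) (fun _ => rfl)
  simp only [hQA, hQB, hQC, hQD]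
  rw [hv₂ h, hv₁ h, hX2eq h]
  simp only [Ew1, Ew2, Ew3, Ec1, Eg1, Eg1d, Eg1dd, EX, EX1, EX2, Ec2, Eg2, Eg2d, Eg2dd]
  norm_num
  simp only [hsymm]
  ring
end

section
/- Let f : ℝ × ℝ → ℝ be twice continuously differentiable and let x : ℝ → ℝ be four times continuously differentiable on a neighborhood of t₀ with x''(t) = f(x(t), t) there. Write x₀ = x(t₀), v₀ = x'(t₀), and for each h set x̄₁(h) = x₀ + (h/2)·v₀, v̄₂(h) = v₀ + h·f(x̄₁(h), t₀ + h/2), x̄₂(h) = x̄₁(h) + (h/2)·v̄₂(h). Then, as h → 0, x̄₂(h) − x(t₀ + h) = [ ∂₁f·v₀ + ∂₂f ]·(h³/12) + o(h³) and v̄₂(h) − x'(t₀ + h) = −[ (1/2)·∂₁₁f·v₀² + ∂₁₂f·v₀ + (1/2)·∂₂₂f + 2·∂₁f·f ]·(h³/12) + o(h³), where all derivatives of f are evaluated at (x₀, t₀) and ∂₁, ∂₂ denote partial derivatives with respect to the first and second argument of f. -/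
open Asymptotics Filter Set

/-- If `R 0 = 0` and `R' = o(h^n)` near `0`, then `R = o(h^(n+1))`. -/
lemma littleO_of_deriv_littleO {R R' : ℝ → ℝ} {U : Set ℝ} {n : ℕ} (hU : IsOpen U)
    (h0 : (0:ℝ) ∈ U) (hR0 : R 0 = 0) (hd : ∀ t ∈ U, HasDerivAt R (R' t) t)
    (ho : R' =o[nhds 0] fun h : ℝ => h ^ n) :
    R =o[nhds 0] fun h : ℝ => h ^ (n + 1) := by
  rw [isLittleO_iff] at ho ⊢
  intro ε hε
  have hev := (ho hε).and (hU.mem_nhds h0)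
  rw [Metric.eventually_nhds_iff] at hev ⊢
  obtain ⟨δ, hδ, hball⟩ := hev
  refine ⟨δ, hδ, fun {h} hh => ?_⟩
  simp only [dist_zero_right, Real.norm_eq_abs] at hh ⊢
  have habs : ∀ t ∈ uIcc (0:ℝ) h, |t| ≤ |h| := by
    intro t ht
    rcases Set.mem_uIcc.1 ht with ⟨h1, h2⟩ | ⟨h1, h2⟩
    · rw [abs_of_nonneg h1]; exact h2.trans (le_abs_self h)
    · rw [abs_of_nonpos h2]; exact (neg_le_neg h1).trans (neg_le_abs h)
  have hsub : uIcc (0:ℝ) h ⊆ Metric.ball (0:ℝ) δ := fun t ht => by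
    rw [Metric.mem_ball, dist_zero_right, Real.norm_eq_abs]
    exact lt_of_le_of_lt (habs t ht) hh
  have key : ∀ t ∈ uIcc (0:ℝ) h, HasDerivWithinAt R (R' t) (uIcc 0 h) t := fun t ht =>
    (hd t (hball (hsub ht)).2).hasDerivWithinAt
  have hb : ∀ t ∈ uIcc (0:ℝ) h, ‖R' t‖ ≤ ε * |h| ^ n := fun t ht => by
    have := (hball (hsub ht)).1
    simp only [Real.norm_eq_abs, abs_pow] at this
    exact this.trans (mul_le_mul_of_nonneg_left
      (pow_le_pow_left₀ (abs_nonneg t) (habs t ht) n) hε.le)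
  have := (convex_uIcc (0:ℝ) h).norm_image_sub_le_of_norm_hasDerivWithin_le
    key hb (left_mem_uIcc) (right_mem_uIcc)
  simp only [hR0, sub_zero, Real.norm_eq_abs] at this
  calc |R h| ≤ ε * |h| ^ n * |h| := this
    _ = ε * |h ^ (n+1)| := by rw [abs_pow]; ring

/-- Peano form of Taylor's theorem on an open set. -/
lemma taylor_peano {U : Set ℝ} (hU : IsOpen U) (h0 : (0:ℝ) ∈ U) :
    ∀ (n : ℕ) (g : ℝ → ℝ), ContDiffOn ℝ n g U →
    (fun h : ℝ => g h - ∑ k ∈ Finset.range (n+1),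
        iteratedDeriv k g 0 * h ^ k / (Nat.factorial k)) =o[nhds 0] fun h : ℝ => h ^ n := by
  intro n
  induction n with
  | zero =>
    intro g hg
    simp only [Finset.range_one, Finset.sum_singleton, iteratedDeriv_zero, pow_zero,
      Nat.factorial_zero, Nat.cast_one, mul_one, div_one]
    have hcont : ContinuousAt g 0 :=
      (hg.continuousOn.continuousWithinAt h0).continuousAt (hU.mem_nhds h0)
    rw [isLittleO_one_iff]
    have h2 : Tendsto (fun h : ℝ => g h - g 0) (nhds 0) (nhds (g 0 - g 0)) :=
      hcont.tendsto.sub tendsto_const_nhds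
    simpa using h2
  | succ n IH =>
    intro g hg
    have hdiff : DifferentiableOn ℝ g U :=
      hg.differentiableOn (by exact_mod_cast Nat.succ_ne_zero n)
    have hderiv : ContDiffOn ℝ n (deriv g) U :=
      ((contDiffOn_succ_iff_deriv_of_isOpen hU).1 hg).2.2
    have hIH := IH (deriv g) hderiv
    set R : ℝ → ℝ := fun h => g h - ∑ k ∈ Finset.range (n+2),
        iteratedDeriv k g 0 * h ^ k / (Nat.factorial k) with hR
    have hR0 : R 0 = 0 := by
      simp only [hR]
      rw [Finset.sum_eq_single 0]
      · simp
      · intro k _ hk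
        rcases Nat.exists_eq_succ_of_ne_zero hk with ⟨m, rfl⟩
        simp [pow_succ]
      · simp
    have hd : ∀ t ∈ U, HasDerivAt R
        (deriv g t - ∑ k ∈ Finset.range (n+1),
          iteratedDeriv k (deriv g) 0 * t ^ k / (Nat.factorial k)) t := by
      intro t ht
      have h1 : HasDerivAt g (deriv g t) t :=
        ((hdiff t ht).differentiableAt (hU.mem_nhds ht)).hasDerivAt
      have h2 : HasDerivAt (fun h : ℝ => ∑ k ∈ Finset.range (n+2),
          iteratedDeriv k g 0 * h ^ k / (Nat.factorial k))
          (∑ k ∈ Finset.range (n+1),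
            iteratedDeriv k (deriv g) 0 * t ^ k / (Nat.factorial k)) t := by
        have : ∀ k ∈ Finset.range (n+2), HasDerivAt
            (fun h : ℝ => iteratedDeriv k g 0 * h ^ k / (Nat.factorial k))
            (iteratedDeriv k g 0 * (k * t ^ (k-1)) / (Nat.factorial k)) t := by
          intro k _
          exact (((hasDerivAt_pow k t).const_mul _).div_const _)
        have hsum := HasDerivAt.fun_sum this
        refine hsum.congr_deriv ?_
        symm
        rw [Finset.sum_range_succ' (fun k => iteratedDeriv k g 0 * (↑k * t ^ (k-1)) / ↑(Nat.factorial k)) (n+1)]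
        simp only [Nat.cast_zero, zero_mul, mul_zero, zero_div, add_zero]
        apply Finset.sum_congr rfl
        intro k _
        rw [← iteratedDeriv_succ', Nat.add_sub_cancel, Nat.factorial_succ]
        have hk0 : (Nat.factorial k : ℝ) ≠ 0 := by positivity
        push_cast
        field_simp
      exact h1.sub h2
    exact littleO_of_deriv_littleO hU h0 hR0 hd (hIH.congr' (by
      filter_upwards [hU.mem_nhds h0] with t ht
      rfl) EventuallyEq.rfl)

lemma clm_expand (L : ℝ × ℝ →L[ℝ] ℝ) (p : ℝ × ℝ) :
    L p = p.1 * L (1, 0) + p.2 * L (0, 1) := by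
  have hp : (p.1 • ((1:ℝ), (0:ℝ)) + p.2 • ((0:ℝ), (1:ℝ))) = p := by
    simp [Prod.ext_iff]
  conv_lhs => rw [← hp]
  rw [map_add, map_smul, map_smul, smul_eq_mul, smul_eq_mul]

lemma clm2_expand (B : ℝ × ℝ →L[ℝ] (ℝ × ℝ →L[ℝ] ℝ)) (p q : ℝ × ℝ) :
    B p q = p.1 * q.1 * B (1, 0) (1, 0) + p.1 * q.2 * B (1, 0) (0, 1)
      + p.2 * q.1 * B (0, 1) (1, 0) + p.2 * q.2 * B (0, 1) (0, 1) := by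
  have hB : B p = p.1 • B (1, 0) + p.2 • B (0, 1) := by
    have hp : (p.1 • ((1:ℝ), (0:ℝ)) + p.2 • ((0:ℝ), (1:ℝ))) = p := by
      simp [Prod.ext_iff]
    conv_lhs => rw [← hp]
    rw [map_add, map_smul, map_smul]
  rw [hB]
  simp only [ContinuousLinearMap.add_apply, ContinuousLinearMap.smul_apply, smul_eq_mul]
  rw [clm_expand (B (1,0)) q, clm_expand (B (0,1)) q]
  ring

/-- Local errors of method (4.3): with `x̄₁(h) = x₀ + (h/2)·v₀`,
`v̄₂(h) = v₀ + h·f(x̄₁(h), t₀ + h/2)`, `x̄₂(h) = x̄₁(h) + (h/2)·v̄₂(h)`, one has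
`x̄₂(h) − x(t₀ + h) = [∂₁f·v₀ + ∂₂f]·(h³/12) + o(h³)` and
`v̄₂(h) − x'(t₀ + h) = −[(1/2)·∂₁₁f·v₀² + ∂₁₂f·v₀ + (1/2)·∂₂₂f + 2·∂₁f·f]·(h³/12) + o(h³)`,
all derivatives of `f` evaluated at `(x₀, t₀)`. -/
theorem deVogelaere_method_4_3_local_errors
    (f : ℝ × ℝ → ℝ) (hf : ContDiff ℝ 2 f) (t₀ : ℝ)
    (x : ℝ → ℝ) (s : Set ℝ) (hs : s ∈ nhds t₀)
    (hx : ContDiffOn ℝ 4 x s)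
    (hode : ∀ t ∈ s, deriv (deriv x) t = f (x t, t))
    (x₁ v₂ x₂ : ℝ → ℝ)
    (hx₁ : ∀ h : ℝ, x₁ h = x t₀ + h / 2 * deriv x t₀)
    (hv₂ : ∀ h : ℝ, v₂ h = deriv x t₀ + h * f (x₁ h, t₀ + h / 2))
    (hx₂ : ∀ h : ℝ, x₂ h = x₁ h + h / 2 * v₂ h) :
    ((fun h : ℝ =>
        x₂ h - x (t₀ + h)
          - (deriv (fun u => f (u, t₀)) (x t₀) * deriv x t₀
              + deriv (fun t => f (x t₀, t)) t₀) * (h ^ 3 / 12))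
      =o[nhds 0] fun h : ℝ => h ^ 3) ∧
    ((fun h : ℝ =>
        v₂ h - deriv x (t₀ + h)
          + ((1 / 2) * deriv (fun u => deriv (fun u' => f (u', t₀)) u) (x t₀)
                * (deriv x t₀) ^ 2
              + deriv (fun t => deriv (fun u => f (u, t)) (x t₀)) t₀ * deriv x t₀
              + (1 / 2) * deriv (fun t => deriv (fun t' => f (x t₀, t')) t) t₀
              + 2 * deriv (fun u => f (u, t₀)) (x t₀) * f (x t₀, t₀)) * (h ^ 3 / 12))
      =o[nhds 0] fun h : ℝ => h ^ 3) := by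
  obtain ⟨U, hUs, hUopen, ht₀U⟩ := mem_nhds_iff.1 hs
  set x₀ : ℝ := x t₀ with hx₀def
  set v₀ : ℝ := deriv x t₀ with hv₀def
  set p₀ : ℝ × ℝ := (x₀, t₀) with hp₀def
  set f₀ : ℝ := f p₀ with hf₀def
  set F' : ℝ × ℝ → (ℝ × ℝ →L[ℝ] ℝ) := fderiv ℝ f with hF'def
  set A : ℝ × ℝ →L[ℝ] ℝ := F' p₀ with hAdef
  set F2 : ℝ × ℝ →L[ℝ] (ℝ × ℝ →L[ℝ] ℝ) := fderiv ℝ F' p₀ with hF2def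
  set a : ℝ := A (1, 0) with hadef
  set b : ℝ := A (0, 1) with hbdef
  set c11 : ℝ := F2 (1, 0) (1, 0) with hc11def
  set c21 : ℝ := F2 (0, 1) (1, 0) with hc21def
  set c22 : ℝ := F2 (0, 1) (0, 1) with hc22def
  -- basic differentiability of f
  have hfd : ∀ p, HasFDerivAt f (F' p) p := fun p =>
    ((hf.differentiable two_ne_zero) p).hasFDerivAt
  have hF'cd : ContDiff ℝ 1 F' := hf.fderiv_right (le_refl _)
  have hF2 : HasFDerivAt F' F2 p₀ := ((hF'cd.differentiable one_ne_zero) p₀).hasFDerivAt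
  have hsymm : F2 (1, 0) (0, 1) = c21 :=
    second_derivative_symmetric hfd hF2 (1, 0) (0, 1)
  -- identification of the partial derivatives in the statement
  have ha : deriv (fun u => f (u, t₀)) x₀ = a := by
    have hc : HasDerivAt (fun u : ℝ => (u, t₀)) ((1:ℝ), (0:ℝ)) x₀ :=
      (hasDerivAt_id x₀).prodMk (hasDerivAt_const x₀ t₀)
    exact ((hfd p₀).comp_hasDerivAt x₀ hc).deriv
  have hb : deriv (fun t => f (x₀, t)) t₀ = b := by
    have hc : HasDerivAt (fun t : ℝ => (x₀, t)) ((0:ℝ), (1:ℝ)) t₀ :=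
      (hasDerivAt_const t₀ x₀).prodMk (hasDerivAt_id t₀)
    exact ((hfd p₀).comp_hasDerivAt t₀ hc).deriv
  have hinner1 : (fun u => deriv (fun u' => f (u', t₀)) u) = fun u => F' (u, t₀) (1, 0) := by
    funext u
    exact (((hfd (u, t₀)).comp_hasDerivAt u
      ((hasDerivAt_id u).prodMk (hasDerivAt_const u t₀)))).deriv
  have hd11 : deriv (fun u => deriv (fun u' => f (u', t₀)) u) x₀ = c11 := by
    rw [hinner1]
    have hc : HasDerivAt (fun u : ℝ => F' (u, t₀)) (F2 (1, 0)) x₀ :=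
      hF2.comp_hasDerivAt x₀ ((hasDerivAt_id x₀).prodMk (hasDerivAt_const x₀ t₀))
    have := (hc.clm_apply (hasDerivAt_const x₀ ((1:ℝ), (0:ℝ)))).deriv
    simpa using this
  have hd21 : deriv (fun t => deriv (fun u => f (u, t)) x₀) t₀ = c21 := by
    have hinner : (fun t => deriv (fun u => f (u, t)) x₀) = fun t => F' (x₀, t) (1, 0) := by
      funext t
      exact (((hfd (x₀, t)).comp_hasDerivAt x₀
        ((hasDerivAt_id x₀).prodMk (hasDerivAt_const x₀ t))).deriv)
    rw [hinner]
    have hc : HasDerivAt (fun t : ℝ => F' (x₀, t)) (F2 (0, 1)) t₀ :=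
      hF2.comp_hasDerivAt t₀ ((hasDerivAt_const t₀ x₀).prodMk (hasDerivAt_id t₀))
    have := (hc.clm_apply (hasDerivAt_const t₀ ((1:ℝ), (0:ℝ)))).deriv
    simpa using this
  have hd22 : deriv (fun t => deriv (fun t' => f (x₀, t')) t) t₀ = c22 := by
    have hinner : (fun t => deriv (fun t' => f (x₀, t')) t) = fun t => F' (x₀, t) (0, 1) := by
      funext t
      exact (((hfd (x₀, t)).comp_hasDerivAt t
        ((hasDerivAt_const t x₀).prodMk (hasDerivAt_id t))).deriv)
    rw [hinner]
    have hc : HasDerivAt (fun t : ℝ => F' (x₀, t)) (F2 (0, 1)) t₀ :=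
      hF2.comp_hasDerivAt t₀ ((hasDerivAt_const t₀ x₀).prodMk (hasDerivAt_id t₀))
    have := (hc.clm_apply (hasDerivAt_const t₀ ((0:ℝ), (1:ℝ)))).deriv
    simpa using this
  -- facts about x on U
  have ht₀s : t₀ ∈ s := mem_of_mem_nhds hs
  have hxU : ContDiffOn ℝ 4 x U := hx.mono hUs
  have hx' : ∀ t ∈ U, HasDerivAt x (deriv x t) t := fun t ht =>
    ((hxU.differentiableOn (by norm_num)).differentiableAt (hUopen.mem_nhds ht)).hasDerivAt
  have hxU' : ContDiffOn ℝ (3+1) x U := by exact_mod_cast hxU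
  have hdx3 : ContDiffOn ℝ 3 (deriv x) U :=
    ((contDiffOn_succ_iff_deriv_of_isOpen hUopen).1 hxU').2.2
  have hx'' : ∀ t ∈ U, HasDerivAt (deriv x) (deriv (deriv x) t) t := fun t ht =>
    ((hdx3.differentiableOn (by norm_num)).differentiableAt (hUopen.mem_nhds ht)).hasDerivAt
  have i2 : deriv (deriv x) t₀ = f₀ := hode t₀ ht₀s
  set w : ℝ → ℝ := fun t => f (x t, t) with hwdef
  have hw : ∀ t ∈ U, HasDerivAt w (F' (x t, t) (deriv x t, 1)) t := by
    intro t ht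
    have hcur : HasDerivAt (fun u : ℝ => ((x u, u) : ℝ × ℝ)) ((deriv x t, 1) : ℝ × ℝ) t :=
      (hx' t ht).prodMk (hasDerivAt_id t)
    exact (hfd (x t, t)).comp_hasDerivAt_of_eq t hcur rfl
  have heq2 : deriv (deriv x) =ᶠ[nhds t₀] w :=
    eventually_of_mem (hUopen.mem_nhds ht₀U) (fun t ht => hode t (hUs ht))
  have i3 : deriv (deriv (deriv x)) t₀ = a * v₀ + b := by
    rw [heq2.deriv_eq, (hw t₀ ht₀U).deriv]
    rw [clm_expand]
    simp only [← hv₀def, ← hx₀def]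
    rw [← hAdef]
    ring
  have i4 : deriv (deriv (deriv (deriv x))) t₀
      = c11 * v₀^2 + 2 * c21 * v₀ + c22 + a * f₀ := by
    have heq3 : deriv (deriv (deriv x)) =ᶠ[nhds t₀] deriv w := heq2.deriv
    have heq4 : deriv w =ᶠ[nhds t₀] fun t => F' (x t, t) (deriv x t, 1) :=
      eventually_of_mem (hUopen.mem_nhds ht₀U) (fun t ht => (hw t ht).deriv)
    rw [(heq3.trans heq4).deriv_eq]
    have hcur : HasDerivAt (fun u : ℝ => ((x u, u) : ℝ × ℝ)) ((v₀, 1) : ℝ × ℝ) t₀ :=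
      (hx' t₀ ht₀U).prodMk (hasDerivAt_id t₀)
    have hc : HasDerivAt (fun t : ℝ => F' (x t, t)) (F2 (v₀, 1)) t₀ :=
      hF2.comp_hasDerivAt_of_eq t₀ hcur rfl
    have hu : HasDerivAt (fun t : ℝ => ((deriv x t, 1) : ℝ × ℝ))
        ((deriv (deriv x) t₀, 0) : ℝ × ℝ) t₀ :=
      (hx'' t₀ ht₀U).prodMk (hasDerivAt_const t₀ 1)
    have := (hc.clm_apply hu).deriv
    rw [this, i2]
    rw [show (F' (x t₀, t₀)) = A from rfl, clm2_expand, clm_expand A, hsymm]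
    simp only [← hv₀def, ← hadef, ← hbdef]
    ring
  -- the predictor function g
  set g : ℝ → ℝ := fun h => f (x₀ + h / 2 * v₀, t₀ + h / 2) with hgdef
  set γ : ℝ → ℝ × ℝ := fun h => (x₀ + h / 2 * v₀, t₀ + h / 2) with hγdef
  have hγ : ∀ h : ℝ, HasDerivAt γ ((v₀ / 2, 1 / 2) : ℝ × ℝ) h := by
    intro h
    have h1 : HasDerivAt (fun h : ℝ => x₀ + h / 2 * v₀) (v₀ / 2) h := by
      have := (((hasDerivAt_id h).div_const 2).mul_const v₀).const_add x₀
      exact this.congr_deriv (by ring)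
    have h2 : HasDerivAt (fun h : ℝ => t₀ + h / 2) ((1:ℝ) / 2) h :=
      ((hasDerivAt_id h).div_const 2).const_add t₀
    exact h1.prodMk h2
  have hγ0 : γ 0 = p₀ := by simp [hγdef, hp₀def]
  have hg' : ∀ h : ℝ, HasDerivAt g ((F' (γ h)) ((v₀ / 2, 1 / 2) : ℝ × ℝ)) h := fun h =>
    (hfd (γ h)).comp_hasDerivAt_of_eq h (hγ h) rfl
  have hgc : ContDiff ℝ 2 g := by
    apply hf.comp
    exact (contDiff_const.add ((contDiff_id.div_const 2).mul contDiff_const)).prodMk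
      (contDiff_const.add (contDiff_id.div_const 2))
  have j0 : g 0 = f₀ := by simp [hgdef, hf₀def, hp₀def]
  have hderivg : deriv g = fun h => (F' (γ h)) ((v₀ / 2, 1 / 2) : ℝ × ℝ) :=
    funext fun h => (hg' h).deriv
  have j1 : deriv g 0 = v₀ / 2 * a + 1 / 2 * b := by
    have hval : deriv g 0 = (F' (γ 0)) ((v₀ / 2, 1 / 2) : ℝ × ℝ) := (hg' 0).deriv
    rw [hval, hγ0, ← hAdef, clm_expand]
  have j2 : iteratedDeriv 2 g 0 = v₀ ^ 2 / 4 * c11 + v₀ / 2 * c21 + 1 / 4 * c22 := by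
    show iteratedDeriv (1+1) g 0 = _
    rw [iteratedDeriv_succ, iteratedDeriv_one, hderivg]
    have hc : HasDerivAt (fun h : ℝ => F' (γ h)) (F2 ((v₀ / 2, 1 / 2) : ℝ × ℝ)) 0 :=
      hF2.comp_hasDerivAt_of_eq 0 (hγ 0) hγ0.symm
    have hkey : deriv (fun h : ℝ => (F' (γ h)) ((v₀ / 2, 1 / 2) : ℝ × ℝ)) 0
        = (F2 ((v₀ / 2, 1 / 2) : ℝ × ℝ)) ((v₀ / 2, 1 / 2) : ℝ × ℝ) + (F' (γ 0)) 0 :=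
      (hc.clm_apply (hasDerivAt_const 0 ((v₀ / 2, 1 / 2) : ℝ × ℝ))).deriv
    rw [hkey, clm2_expand, hsymm]
    simp only [map_zero, add_zero]
    norm_num
    ring
  -- Taylor expansions
  set V : Set ℝ := (fun h : ℝ => t₀ + h) ⁻¹' U with hVdef
  have hVopen : IsOpen V := hUopen.preimage (continuous_const.add continuous_id)
  have h0V : (0:ℝ) ∈ V := by simp [hVdef]; simpa using ht₀U
  have hX : ContDiffOn ℝ 3 (fun h => x (t₀ + h)) V :=
    (hxU.of_le (by norm_num)).comp ((contDiff_const.add contDiff_id).contDiffOn)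
      (fun h hh => hh)
  have hD : ContDiffOn ℝ 3 (fun h => deriv x (t₀ + h)) V :=
    hdx3.comp ((contDiff_const.add contDiff_id).contDiffOn) (fun h hh => hh)
  have e2 : ∀ y : ℝ → ℝ, iteratedDeriv 2 y = deriv (deriv y) := fun y => by
    rw [show (2:ℕ) = 1 + 1 from rfl, iteratedDeriv_succ, iteratedDeriv_one]
  have e3 : ∀ y : ℝ → ℝ, iteratedDeriv 3 y = deriv (deriv (deriv y)) := fun y => by
    rw [show (3:ℕ) = 2 + 1 from rfl, iteratedDeriv_succ, e2]
  have hkX : ∀ (y : ℝ → ℝ) (k : ℕ), iteratedDeriv k (fun h => y (t₀ + h)) 0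
      = iteratedDeriv k y t₀ := fun y k => by
    rw [iteratedDeriv_comp_const_add]
    norm_num
  have hTX : (fun h : ℝ => x (t₀ + h)
      - (x₀ + v₀ * h + f₀ * (h^2/2) + (a * v₀ + b) * (h^3/6))) =o[nhds 0]
      (fun h : ℝ => h ^ 3) := by
    have hT := taylor_peano hVopen h0V 3 (fun h => x (t₀ + h)) (by exact_mod_cast hX)
    refine hT.congr_left fun h => ?_
    have hsum : (∑ k ∈ Finset.range (3+1),
        iteratedDeriv k (fun h' => x (t₀ + h')) 0 * h ^ k / (Nat.factorial k))
        = x₀ + v₀ * h + f₀ * (h^2/2) + (a * v₀ + b) * (h^3/6) := by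
      simp only [Finset.sum_range_succ, Finset.sum_range_zero, hkX, iteratedDeriv_zero,
        iteratedDeriv_one, e2, e3, i2, i3, ← hx₀def, ← hv₀def]
      norm_num [Nat.factorial]
      ring
    rw [hsum]
  have hTD : (fun h : ℝ => deriv x (t₀ + h)
      - (v₀ + f₀ * h + (a * v₀ + b) * (h^2/2)
          + (c11 * v₀^2 + 2 * c21 * v₀ + c22 + a * f₀) * (h^3/6))) =o[nhds 0]
      (fun h : ℝ => h ^ 3) := by
    have hT := taylor_peano hVopen h0V 3 (fun h => deriv x (t₀ + h)) (by exact_mod_cast hD)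
    refine hT.congr_left fun h => ?_
    have hsum : (∑ k ∈ Finset.range (3+1),
        iteratedDeriv k (fun h' => deriv x (t₀ + h')) 0 * h ^ k / (Nat.factorial k))
        = v₀ + f₀ * h + (a * v₀ + b) * (h^2/2)
          + (c11 * v₀^2 + 2 * c21 * v₀ + c22 + a * f₀) * (h^3/6) := by
      simp only [Finset.sum_range_succ, Finset.sum_range_zero, hkX, iteratedDeriv_zero,
        iteratedDeriv_one, e2, e3, i2, i3, i4, ← hv₀def]
      norm_num [Nat.factorial]
      ring
    rw [hsum]
  have hTg1 : (fun h : ℝ => g h - (f₀ + (v₀ / 2 * a + 1 / 2 * b) * h)) =o[nhds 0]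
      (fun h : ℝ => h ^ 1) := by
    have hT := taylor_peano isOpen_univ (mem_univ 0) 1 g
      (by exact_mod_cast (hgc.of_le one_le_two).contDiffOn)
    refine hT.congr_left fun h => ?_
    have hsum : (∑ k ∈ Finset.range (1+1),
        iteratedDeriv k g 0 * h ^ k / (Nat.factorial k))
        = f₀ + (v₀ / 2 * a + 1 / 2 * b) * h := by
      simp only [Finset.sum_range_succ, Finset.sum_range_zero, iteratedDeriv_zero,
        iteratedDeriv_one, j0, j1]
      norm_num [Nat.factorial]
    rw [hsum]
  have hTg2 : (fun h : ℝ => g h - (f₀ + (v₀ / 2 * a + 1 / 2 * b) * h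
      + (v₀ ^ 2 / 4 * c11 + v₀ / 2 * c21 + 1 / 4 * c22) * (h^2/2))) =o[nhds 0]
      (fun h : ℝ => h ^ 2) := by
    have hT := taylor_peano isOpen_univ (mem_univ 0) 2 g
      (by exact_mod_cast hgc.contDiffOn)
    refine hT.congr_left fun h => ?_
    have hsum : (∑ k ∈ Finset.range (2+1),
        iteratedDeriv k g 0 * h ^ k / (Nat.factorial k))
        = f₀ + (v₀ / 2 * a + 1 / 2 * b) * h
          + (v₀ ^ 2 / 4 * c11 + v₀ / 2 * c21 + 1 / 4 * c22) * (h^2/2) := by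
      simp only [Finset.sum_range_succ, Finset.sum_range_zero, iteratedDeriv_zero,
        iteratedDeriv_one, j0, j1, j2]
      norm_num [Nat.factorial]
      ring
    rw [hsum]
  constructor
  · rw [ha, hb]
    have o1 : (fun h : ℝ => h ^ 2 * (g h - (f₀ + (v₀ / 2 * a + 1 / 2 * b) * h)))
        =o[nhds 0] (fun h : ℝ => h ^ 3) := by
      have hmul := (isBigO_refl (fun h : ℝ => h ^ 2) (nhds 0)).mul_isLittleO hTg1
      have heq : (fun h : ℝ => h ^ 2 * h ^ 1) = fun h : ℝ => h ^ 3 := by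
        funext h; ring
      rwa [heq] at hmul
    have o2 := (o1.const_mul_left (1/2 : ℝ)).sub hTX
    refine o2.congr_left fun h => ?_
    rw [hx₂ h, hv₂ h, hx₁ h]
    simp only [hgdef]
    ring
  · rw [hd11, hd21, hd22, ha]
    have o1 : (fun h : ℝ => h ^ 1 * (g h - (f₀ + (v₀ / 2 * a + 1 / 2 * b) * h
        + (v₀ ^ 2 / 4 * c11 + v₀ / 2 * c21 + 1 / 4 * c22) * (h^2/2))))
        =o[nhds 0] (fun h : ℝ => h ^ 3) := by
      have hmul := (isBigO_refl (fun h : ℝ => h ^ 1) (nhds 0)).mul_isLittleO hTg2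
      have heq : (fun h : ℝ => h ^ 1 * h ^ 2) = fun h : ℝ => h ^ 3 := by
        funext h; ring
      rwa [heq] at hmul
    have o2 := o1.sub hTD
    refine o2.congr_left fun h => ?_
    rw [hv₂ h, hx₁ h]
    simp only [hgdef]
    ring
end

section
/- Let H : ℝ × ℝ × ℝ → ℝ (arguments (x, y, t)) be such that H(·,·,τ) is twice continuously differentiable for the fixed time τ, and let h ∈ ℝ. Suppose φ = (X, Y) : ℝ × ℝ → ℝ × ℝ is differentiable and satisfies, for all (x₀, y₀), the implicit equations X(x₀, y₀) = x₀ + h·∂H/∂y(X(x₀, y₀), y₀, τ) and Y(x₀, y₀) = y₀ − h·∂H/∂x(X(x₀, y₀), y₀, τ). Then the determinant of the Fréchet derivative of φ equals 1 at every point; i.e., the implicit first-order method (5.1) applied to a Hamiltonian system preserves area. -/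
/-- The implicit first-order method (5.1) for a Hamiltonian system preserves area:
if `X(x₀,y₀) = x₀ + h·∂H/∂y(X, y₀, τ)` and `Y(x₀,y₀) = y₀ − h·∂H/∂x(X, y₀, τ)`
with `φ = (X, Y)` differentiable and `H(·,·,τ)` twice continuously differentiable,
then the Jacobian determinant of `φ` equals `1` everywhere. -/
theorem deVogelaere_method_5_1_area_preserving
    (H : ℝ × ℝ × ℝ → ℝ) (τ : ℝ)
    (hH : ContDiff ℝ 2 (fun p : ℝ × ℝ => H (p.1, p.2, τ))) (h : ℝ)
    (X Y : ℝ × ℝ → ℝ)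
    (hφ : Differentiable ℝ (fun p : ℝ × ℝ => (X p, Y p)))
    (hX : ∀ p : ℝ × ℝ, X p = p.1 + h * deriv (fun y => H (X p, y, τ)) p.2)
    (hY : ∀ p : ℝ × ℝ, Y p = p.2 - h * deriv (fun x => H (x, p.2, τ)) (X p)) :
    ∀ p : ℝ × ℝ, (fderiv ℝ (fun q : ℝ × ℝ => (X q, Y q)) p).det = 1 := by
  intro p
  set G : ℝ × ℝ → ℝ := fun q => H (q.1, q.2, τ) with hGdef
  have hGd : Differentiable ℝ G := hH.differentiable (by norm_num)
  have hDGd : Differentiable ℝ (fun q => fderiv ℝ G q) :=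
    (hH.fderiv_right (m := 1) (by norm_num)).differentiable (by norm_num)
  have hXd : Differentiable ℝ X := hφ.fst
  have hYd : Differentiable ℝ Y := hφ.snd
  -- rewrite the partial derivatives as fderiv applications
  have hX' : ∀ q : ℝ × ℝ, X q = q.1 + h * fderiv ℝ G (X q, q.2) ((0:ℝ), (1:ℝ)) := by
    intro q
    have h1 : HasDerivAt (fun y' : ℝ => ((X q, y') : ℝ × ℝ)) ((0:ℝ), (1:ℝ)) q.2 :=
      HasDerivAt.prodMk (hasDerivAt_const _ _) (hasDerivAt_id _)
    have h2 := ((hGd (X q, q.2)).hasFDerivAt.comp_hasDerivAt q.2 h1).deriv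
    have h3 : deriv (fun y => H (X q, y, τ)) q.2
        = fderiv ℝ G (X q, q.2) ((0:ℝ), (1:ℝ)) := h2
    calc X q = q.1 + h * deriv (fun y => H (X q, y, τ)) q.2 := hX q
      _ = q.1 + h * fderiv ℝ G (X q, q.2) ((0:ℝ), (1:ℝ)) := by rw [h3]
  have hY' : ∀ q : ℝ × ℝ, Y q = q.2 - h * fderiv ℝ G (X q, q.2) ((1:ℝ), (0:ℝ)) := by
    intro q
    have h1 : HasDerivAt (fun x' : ℝ => ((x', q.2) : ℝ × ℝ)) ((1:ℝ), (0:ℝ)) (X q) :=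
      HasDerivAt.prodMk (hasDerivAt_id _) (hasDerivAt_const _ _)
    have h2 := ((hGd (X q, q.2)).hasFDerivAt.comp_hasDerivAt (X q) h1).deriv
    have h3 : deriv (fun x => H (x, q.2, τ)) (X q)
        = fderiv ℝ G (X q, q.2) ((1:ℝ), (0:ℝ)) := h2
    calc Y q = q.2 - h * deriv (fun x => H (x, q.2, τ)) (X q) := hY q
      _ = q.2 - h * fderiv ℝ G (X q, q.2) ((1:ℝ), (0:ℝ)) := by rw [h3]
  -- second derivative at the intermediate point
  set q₀ : ℝ × ℝ := (X p, p.2) with hq₀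
  set D2 : (ℝ × ℝ) →L[ℝ] (ℝ × ℝ) →L[ℝ] ℝ := fderiv ℝ (fun q => fderiv ℝ G q) q₀ with hD2
  have hsymm : ∀ u v : ℝ × ℝ, D2 u v = D2 v u := fun u v =>
    second_derivative_symmetric (fun y => (hGd y).hasFDerivAt) ((hDGd q₀).hasFDerivAt) u v
  have hbil : ∀ (u₁ u₂ : ℝ) (w : ℝ × ℝ),
      D2 (u₁, u₂) w = u₁ * D2 (1, 0) w + u₂ * D2 (0, 1) w := by
    intro u₁ u₂ w
    have huv : ((u₁, u₂) : ℝ × ℝ) = u₁ • ((1:ℝ), (0:ℝ)) + u₂ • ((0:ℝ), (1:ℝ)) := by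
      simp [Prod.ext_iff]
    rw [huv, map_add, map_smul, map_smul]
    simp [smul_eq_mul]
  -- derivatives of the partial-derivative maps
  have hFy : HasFDerivAt (fun q : ℝ × ℝ => fderiv ℝ G q ((0:ℝ), (1:ℝ)))
      ((ContinuousLinearMap.apply ℝ ℝ ((0:ℝ), (1:ℝ))).comp D2) q₀ :=
    (ContinuousLinearMap.apply ℝ ℝ ((0:ℝ), (1:ℝ))).hasFDerivAt.comp q₀ (hDGd q₀).hasFDerivAt
  have hFx : HasFDerivAt (fun q : ℝ × ℝ => fderiv ℝ G q ((1:ℝ), (0:ℝ)))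
      ((ContinuousLinearMap.apply ℝ ℝ ((1:ℝ), (0:ℝ))).comp D2) q₀ :=
    (ContinuousLinearMap.apply ℝ ℝ ((1:ℝ), (0:ℝ))).hasFDerivAt.comp q₀ (hDGd q₀).hasFDerivAt
  -- the inner map q ↦ (X q, q.2)
  set M : (ℝ × ℝ) →L[ℝ] (ℝ × ℝ) := (fderiv ℝ X p).prod (ContinuousLinearMap.snd ℝ ℝ ℝ) with hM
  have hMhas : HasFDerivAt (fun q : ℝ × ℝ => ((X q, q.2) : ℝ × ℝ)) M p :=
    HasFDerivAt.prodMk (hXd p).hasFDerivAt (hasFDerivAt_snd)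
  -- implicit differentiation for X and Y
  have hXhas : HasFDerivAt X
      (ContinuousLinearMap.fst ℝ ℝ ℝ
        + h • (((ContinuousLinearMap.apply ℝ ℝ ((0:ℝ), (1:ℝ))).comp D2).comp M)) p := by
    have hR : HasFDerivAt (fun q : ℝ × ℝ => q.1 + h * fderiv ℝ G (X q, q.2) ((0:ℝ), (1:ℝ)))
        (ContinuousLinearMap.fst ℝ ℝ ℝ
          + h • (((ContinuousLinearMap.apply ℝ ℝ ((0:ℝ), (1:ℝ))).comp D2).comp M)) p :=
      (hasFDerivAt_fst).add ((hFy.comp p hMhas).const_mul h)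
    exact hR.congr_of_eventuallyEq (Filter.Eventually.of_forall hX')
  have hYhas : HasFDerivAt Y
      (ContinuousLinearMap.snd ℝ ℝ ℝ
        - h • (((ContinuousLinearMap.apply ℝ ℝ ((1:ℝ), (0:ℝ))).comp D2).comp M)) p := by
    have hR : HasFDerivAt (fun q : ℝ × ℝ => q.2 - h * fderiv ℝ G (X q, q.2) ((1:ℝ), (0:ℝ)))
        (ContinuousLinearMap.snd ℝ ℝ ℝ
          - h • (((ContinuousLinearMap.apply ℝ ℝ ((1:ℝ), (0:ℝ))).comp D2).comp M)) p :=
      (hasFDerivAt_snd).sub ((hFx.comp p hMhas).const_mul h)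
    exact hR.congr_of_eventuallyEq (Filter.Eventually.of_forall hY')
  -- scalar entries of the Jacobian
  set a : ℝ := fderiv ℝ X p ((1:ℝ), (0:ℝ)) with ha
  set b : ℝ := fderiv ℝ X p ((0:ℝ), (1:ℝ)) with hb
  set c : ℝ := fderiv ℝ Y p ((1:ℝ), (0:ℝ)) with hc
  set d : ℝ := fderiv ℝ Y p ((0:ℝ), (1:ℝ)) with hd
  set sxx : ℝ := D2 (1, 0) (1, 0) with hsxx
  set sxy : ℝ := D2 (1, 0) (0, 1) with hsxy
  set syx : ℝ := D2 (0, 1) (1, 0) with hsyx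
  set syy : ℝ := D2 (0, 1) (0, 1) with hsyy
  have hM10 : M ((1:ℝ), (0:ℝ)) = (a, 0) := by
    simp [hM, ← ha]
  have hM01 : M ((0:ℝ), (1:ℝ)) = (b, 1) := by
    simp [hM, ← hb]
  have ea : a = 1 + h * (a * sxy + 0 * syy) := by
    have h0 := congrArg (fun L : (ℝ × ℝ) →L[ℝ] ℝ => L ((1:ℝ), (0:ℝ))) hXhas.fderiv
    simp only [ContinuousLinearMap.add_apply, ContinuousLinearMap.smul_apply,
      ContinuousLinearMap.comp_apply, ContinuousLinearMap.apply_apply,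
      ContinuousLinearMap.coe_fst', smul_eq_mul] at h0
    rw [hM10, hbil, ← hsxy, ← hsyy] at h0
    exact h0
  have eb : b = 0 + h * (b * sxy + 1 * syy) := by
    have h0 := congrArg (fun L : (ℝ × ℝ) →L[ℝ] ℝ => L ((0:ℝ), (1:ℝ))) hXhas.fderiv
    simp only [ContinuousLinearMap.add_apply, ContinuousLinearMap.smul_apply,
      ContinuousLinearMap.comp_apply, ContinuousLinearMap.apply_apply,
      ContinuousLinearMap.coe_fst', smul_eq_mul] at h0
    rw [hM01, hbil, ← hsxy, ← hsyy] at h0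
    exact h0
  have ec : c = 0 - h * (a * sxx + 0 * syx) := by
    have h0 := congrArg (fun L : (ℝ × ℝ) →L[ℝ] ℝ => L ((1:ℝ), (0:ℝ))) hYhas.fderiv
    simp only [ContinuousLinearMap.sub_apply, ContinuousLinearMap.smul_apply,
      ContinuousLinearMap.comp_apply, ContinuousLinearMap.apply_apply,
      ContinuousLinearMap.coe_snd', smul_eq_mul] at h0
    rw [hM10, hbil, ← hsxx, ← hsyx] at h0
    exact h0
  have ed : d = 1 - h * (b * sxx + 1 * syx) := by
    have h0 := congrArg (fun L : (ℝ × ℝ) →L[ℝ] ℝ => L ((0:ℝ), (1:ℝ))) hYhas.fderiv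
    simp only [ContinuousLinearMap.sub_apply, ContinuousLinearMap.smul_apply,
      ContinuousLinearMap.comp_apply, ContinuousLinearMap.apply_apply,
      ContinuousLinearMap.coe_snd', smul_eq_mul] at h0
    rw [hM01, hbil, ← hsxx, ← hsyx] at h0
    exact h0
  have hcl : sxy = syx := hsymm _ _
  -- determinant computation
  have hA : fderiv ℝ (fun q : ℝ × ℝ => (X q, Y q)) p
      = (fderiv ℝ X p).prod (fderiv ℝ Y p) :=
    (HasFDerivAt.prodMk (hXd p).hasFDerivAt (hYd p).hasFDerivAt).fderiv
  rw [hA]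
  have hdet : ((fderiv ℝ X p).prod (fderiv ℝ Y p)).det = a * d - b * c := by
    show LinearMap.det (((fderiv ℝ X p).prod (fderiv ℝ Y p) :
        (ℝ × ℝ) →L[ℝ] ℝ × ℝ) : (ℝ × ℝ) →ₗ[ℝ] ℝ × ℝ) = a * d - b * c
    rw [← LinearMap.det_toMatrix (Module.Basis.finTwoProd ℝ), Matrix.det_fin_two]
    simp only [LinearMap.toMatrix_apply, Module.Basis.finTwoProd_zero, Module.Basis.finTwoProd_one,
      Module.Basis.coe_finTwoProd_repr, ContinuousLinearMap.coe_coe, ContinuousLinearMap.prod_apply,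
      Matrix.cons_val_zero, Matrix.cons_val_one, Matrix.head_cons]
    rfl
  rw [hdet]
  have key : a * (1 - h * sxy) = 1 := by linear_combination ea
  linear_combination a * ed - b * ec + key + (h * a) * hcl
end

section
/- Let H : ℝ × ℝ × ℝ → ℝ be three times continuously differentiable, set f = ∂H/∂y and g = −∂H/∂x, let α ∈ ℝ, and let (x, y) : ℝ → ℝ × ℝ be a solution of ẋ = f(x, y, t), ẏ = g(x, y, t) that is three times continuously differentiable near t₀, with x₀ = x(t₀), y₀ = y(t₀). Suppose X : ℝ → ℝ is continuous at 0 with X(0) = x₀ and satisfies X(h) = x₀ + h·f(X(h), y₀, t₀ + α·h) for all h near 0, and set Y(h) = y₀ + h·g(X(h), y₀, t₀ + α·h). Then, as h → 0, X(h) − x(t₀ + h) = [ −(1/2)·∂/∂y(f·g) + (α − 1/2)·∂f/∂t ]·h² + o(h²) and Y(h) − y(t₀ + h) = [ (1/2)·∂/∂x(f·g) + (α − 1/2)·∂g/∂t ]·h² + o(h²), where the bracketed coefficients are evaluated at (x₀, y₀, t₀) and ∂/∂y(f·g), ∂/∂x(f·g) are partial derivatives of the product f·g. -/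
open Asymptotics Filter Topology

lemma taylor2 {φ : ℝ → ℝ} {t₀ a : ℝ} {u : Set ℝ} (hu : u ∈ 𝓝 t₀)
    (hdiff : ∀ t ∈ u, DifferentiableAt ℝ φ t)
    (ha : HasDerivAt (deriv φ) a t₀) :
    (fun h : ℝ => φ (t₀ + h) - φ t₀ - h * deriv φ t₀ - h ^ 2 / 2 * a) =o[𝓝 0]
      fun h : ℝ => h ^ 2 := by
  set b := deriv φ t₀ with hb
  set ψ : ℝ → ℝ := fun h => φ (t₀ + h) - φ t₀ - h * b - h ^ 2 / 2 * a with hψ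
  have hψ0 : ψ 0 = 0 := by simp [hψ]
  -- derivative of ψ
  have hψ' : ∀ h : ℝ, t₀ + h ∈ u → HasDerivAt ψ (deriv φ (t₀ + h) - b - h * a) h := by
    intro h hh
    have h1 : HasDerivAt (fun h : ℝ => φ (t₀ + h)) (deriv φ (t₀ + h)) h := by
      have := ((hdiff _ hh).hasDerivAt).comp h (((hasDerivAt_id h).const_add t₀))
      simpa [Function.comp_def] using this
    have h2 : HasDerivAt (fun h : ℝ => h * b) b h := by simpa using (hasDerivAt_id h).mul_const b
    have h3 : HasDerivAt (fun h : ℝ => h ^ 2 / 2 * a) (h * a) h := by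
      have : HasDerivAt (fun h : ℝ => h ^ 2 / 2 * a) (2 * h ^ 1 / 2 * a) h := by
        exact (((hasDerivAt_pow 2 h).div_const 2).mul_const a)
      simpa using this
    exact ((h1.sub_const (φ t₀)).sub h2).sub h3
  -- deriv φ near t₀ is b + h a + o(h)
  have hlo : (fun h : ℝ => deriv φ (t₀ + h) - b - h * a) =o[𝓝 0] fun h => h := by
    have := ha.isLittleO
    have htend : Tendsto (fun h : ℝ => t₀ + h) (𝓝 0) (𝓝 t₀) := by
      simpa using (continuous_add_left t₀).tendsto (0:ℝ)
    have h2 := this.comp_tendsto htend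
    simp only [Function.comp_def, add_sub_cancel_left] at h2
    simpa [smul_eq_mul, mul_comm] using h2
  rw [isLittleO_iff]
  intro ε hε
  rw [isLittleO_iff] at hlo
  obtain ⟨δ₁, hδ₁, hball⟩ := Metric.mem_nhds_iff.1 (hlo (half_pos hε))
  obtain ⟨δ₂, hδ₂, hball₂⟩ := Metric.mem_nhds_iff.1 hu
  have hδ := lt_min hδ₁ hδ₂
  filter_upwards [Metric.ball_mem_nhds (0:ℝ) (lt_min hδ₁ hδ₂)] with h hh
  -- MVT on the segment from 0 to h
  have hseg : ∀ ξ ∈ segment ℝ (0:ℝ) h, |ξ| ≤ |h| := by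
    intro ξ hξ
    rw [segment_eq_image] at hξ
    obtain ⟨t, ht, rfl⟩ := hξ
    simp only [smul_eq_mul, mul_zero, zero_add]
    rw [abs_mul]
    calc |t| * |h| ≤ 1 * |h| := by
          apply mul_le_mul_of_nonneg_right _ (abs_nonneg h)
          rw [abs_le]; constructor <;> linarith [ht.1, ht.2]
      _ = |h| := one_mul _
  have key : ‖ψ h - ψ 0‖ ≤ ε / 2 * |h| * ‖h - 0‖ := by
    apply Convex.norm_image_sub_le_of_norm_hasDerivWithin_le
      (f' := fun ξ => deriv φ (t₀ + ξ) - b - ξ * a)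
    · intro ξ hξ
      have h1 : |ξ| ≤ |h| := hseg ξ hξ
      have : t₀ + ξ ∈ u := by
        apply hball₂
        simp only [Metric.mem_ball, Real.dist_eq, add_sub_cancel_left]
        calc |ξ| ≤ |h| := h1
          _ < δ₂ := lt_of_lt_of_le (by simpa [Real.dist_eq] using hh) (min_le_right _ _)
      exact (hψ' ξ this).hasDerivWithinAt
    · intro ξ hξ
      have h1 : |ξ| ≤ |h| := hseg ξ hξ
      have hξb : ξ ∈ Metric.ball (0:ℝ) δ₁ := by
        simp only [Metric.mem_ball, Real.dist_eq, sub_zero]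
        calc |ξ| ≤ |h| := h1
          _ < δ₁ := lt_of_lt_of_le (by simpa [Real.dist_eq] using hh) (min_le_left _ _)
      have := hball hξb
      simp only [Set.mem_setOf_eq, Real.norm_eq_abs] at this ⊢
      calc |deriv φ (t₀ + ξ) - b - ξ * a| ≤ ε / 2 * |ξ| := this
        _ ≤ ε / 2 * |h| := by
            apply mul_le_mul_of_nonneg_left h1 (by linarith)
    · exact convex_segment _ _
    · exact left_mem_segment _ _ _
    · exact right_mem_segment _ _ _
  rw [hψ0, sub_zero] at key
  calc ‖ψ h‖ ≤ ε / 2 * |h| * ‖h - 0‖ := key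
    _ ≤ ε * ‖h ^ 2‖ := by
        simp only [Real.norm_eq_abs, sub_zero, abs_pow]
        nlinarith [abs_nonneg h, sq_abs h]

/-- Local errors of the implicit first-order method (5.1) for a Hamiltonian system
`ẋ = f = ∂H/∂y`, `ẏ = g = −∂H/∂x`: with `X(h)` defined implicitly by
`X(h) = x₀ + h·f(X(h), y₀, t₀ + α·h)` and `Y(h) = y₀ + h·g(X(h), y₀, t₀ + α·h)`,
`X(h) − x(t₀+h) = [−(1/2)·∂/∂y(f·g) + (α − 1/2)·∂f/∂t]·h² + o(h²)` and
`Y(h) − y(t₀+h) = [(1/2)·∂/∂x(f·g) + (α − 1/2)·∂g/∂t]·h² + o(h²)`,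
the coefficients being evaluated at `(x₀, y₀, t₀)`. -/
theorem deVogelaere_method_5_1_local_errors
    (H : ℝ × ℝ × ℝ → ℝ) (hH : ContDiff ℝ 3 H) (α t₀ : ℝ)
    (f g : ℝ → ℝ → ℝ → ℝ)
    (hfdef : ∀ a b t : ℝ, f a b t = deriv (fun y => H (a, y, t)) b)
    (hgdef : ∀ a b t : ℝ, g a b t = - deriv (fun u => H (u, b, t)) a)
    (x y : ℝ → ℝ) (s : Set ℝ) (hs : s ∈ nhds t₀)
    (hx : ContDiffOn ℝ 3 x s) (hy : ContDiffOn ℝ 3 y s)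
    (hode : ∀ t ∈ s, deriv x t = f (x t) (y t) t ∧ deriv y t = g (x t) (y t) t)
    (X Y : ℝ → ℝ)
    (hXc : ContinuousAt X 0) (hX0 : X 0 = x t₀)
    (hXeq : ∀ᶠ h in nhds (0 : ℝ), X h = x t₀ + h * f (X h) (y t₀) (t₀ + α * h))
    (hYdef : ∀ h : ℝ, Y h = y t₀ + h * g (X h) (y t₀) (t₀ + α * h)) :
    ((fun h : ℝ =>
        X h - x (t₀ + h)
          - (-(1 / 2) * deriv (fun b => f (x t₀) b t₀ * g (x t₀) b t₀) (y t₀)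
              + (α - 1 / 2) * deriv (fun t => f (x t₀) (y t₀) t) t₀) * h ^ 2)
      =o[nhds 0] fun h : ℝ => h ^ 2) ∧
    ((fun h : ℝ =>
        Y h - y (t₀ + h)
          - ((1 / 2) * deriv (fun a => f a (y t₀) t₀ * g a (y t₀) t₀) (x t₀)
              + (α - 1 / 2) * deriv (fun t => g (x t₀) (y t₀) t) t₀) * h ^ 2)
      =o[nhds 0] fun h : ℝ => h ^ 2) := by
  have h13 : (1 : WithTop ℕ∞) ≤ 3 := by norm_num
  have h23 : (2 : WithTop ℕ∞) ≤ 3 := by norm_num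
  have h213 : (2 : WithTop ℕ∞) + 1 ≤ 3 := by norm_num
  have h12 : (1 : WithTop ℕ∞) ≤ 2 := by norm_num
  set p₀ : ℝ × ℝ × ℝ := (x t₀, y t₀, t₀) with hp₀
  set F : ℝ × ℝ × ℝ → ℝ := fun p => fderiv ℝ H p (0, 1, 0) with hF
  set G : ℝ × ℝ × ℝ → ℝ := fun p => -(fderiv ℝ H p (1, 0, 0)) with hG
  have hHd : Differentiable ℝ H := hH.differentiable (by norm_num)
  have hH2 : ContDiff ℝ 2 (fderiv ℝ H) := hH.fderiv_right h213
  have hFC : ContDiff ℝ 2 F := hH2.clm_apply contDiff_const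
  have hGC : ContDiff ℝ 2 G := (hH2.clm_apply contDiff_const).neg
  -- identification of f and g with F and G
  have hfF : ∀ a b t : ℝ, f a b t = F (a, b, t) := by
    intro a b t
    rw [hfdef]
    have hc : HasDerivAt (fun y : ℝ => ((a, y, t) : ℝ × ℝ × ℝ)) (0, 1, 0) b :=
      (hasDerivAt_const b a).prodMk ((hasDerivAt_id b).prodMk (hasDerivAt_const b t))
    exact ((hHd (a, b, t)).hasFDerivAt.comp_hasDerivAt b hc).deriv
  have hgG : ∀ a b t : ℝ, g a b t = G (a, b, t) := by
    intro a b t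
    rw [hgdef]
    have hc : HasDerivAt (fun u : ℝ => ((u, b, t) : ℝ × ℝ × ℝ)) (1, 0, 0) a :=
      (hasDerivAt_id a).prodMk ((hasDerivAt_const a b).prodMk (hasDerivAt_const a t))
    have : deriv (fun u : ℝ => H (u, b, t)) a = fderiv ℝ H (a, b, t) (1, 0, 0) :=
      ((hHd (a, b, t)).hasFDerivAt.comp_hasDerivAt a hc).deriv
    rw [this]
  set DF := fderiv ℝ F p₀ with hDFdef
  set DG := fderiv ℝ G p₀ with hDGdef
  have hDF : HasFDerivAt F DF p₀ := ((hFC.differentiable (by norm_num)) p₀).hasFDerivAt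
  have hDG : HasFDerivAt G DG p₀ := ((hGC.differentiable (by norm_num)) p₀).hasFDerivAt
  set f₀ := F p₀ with hf₀
  set g₀ := G p₀ with hg₀
  set fx := DF (1, 0, 0) with hfx
  set fy := DF (0, 1, 0) with hfy
  set ft := DF (0, 0, 1) with hft
  set gx := DG (1, 0, 0) with hgx
  set gy := DG (0, 1, 0) with hgy
  set gt := DG (0, 0, 1) with hgt
  -- second-derivative symmetry: fx = -gy
  have hsym : fx = -gy := by
    have hd2 : HasFDerivAt (fderiv ℝ H) (fderiv ℝ (fderiv ℝ H) p₀) p₀ :=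
      ((hH2.differentiable (by norm_num)) p₀).hasFDerivAt
    have hF' : HasFDerivAt F
        ((ContinuousLinearMap.apply ℝ ℝ ((0, 1, 0) : ℝ × ℝ × ℝ)).comp
          (fderiv ℝ (fderiv ℝ H) p₀)) p₀ :=
      (ContinuousLinearMap.apply ℝ ℝ ((0, 1, 0) : ℝ × ℝ × ℝ)).hasFDerivAt.comp p₀ hd2
    have hG' : HasFDerivAt G
        (-((ContinuousLinearMap.apply ℝ ℝ ((1, 0, 0) : ℝ × ℝ × ℝ)).comp
          (fderiv ℝ (fderiv ℝ H) p₀))) p₀ :=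
      ((ContinuousLinearMap.apply ℝ ℝ ((1, 0, 0) : ℝ × ℝ × ℝ)).hasFDerivAt.comp p₀ hd2).neg
    have e1 : fx = fderiv ℝ (fderiv ℝ H) p₀ (1, 0, 0) (0, 1, 0) := by
      rw [hfx, hDFdef, hF'.fderiv]; rfl
    have e2 : gy = -(fderiv ℝ (fderiv ℝ H) p₀ (0, 1, 0) (1, 0, 0)) := by
      rw [hgy, hDGdef, hG'.fderiv]; rfl
    have hsymm := (hH.contDiffAt.isSymmSndFDerivAt (by simpa using h23) (x := p₀))
    rw [e1, e2, neg_neg, hsymm ((1, 0, 0) : ℝ × ℝ × ℝ) ((0, 1, 0) : ℝ × ℝ × ℝ)]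
  -- partial derivative identifications
  have curve_t : HasDerivAt (fun t : ℝ => ((x t₀, y t₀, t) : ℝ × ℝ × ℝ)) (0, 0, 1) t₀ :=
    (hasDerivAt_const t₀ (x t₀)).prodMk ((hasDerivAt_const t₀ (y t₀)).prodMk (hasDerivAt_id t₀))
  have curve_b : HasDerivAt (fun b : ℝ => ((x t₀, b, t₀) : ℝ × ℝ × ℝ)) (0, 1, 0) (y t₀) :=
    (hasDerivAt_const _ (x t₀)).prodMk ((hasDerivAt_id _).prodMk (hasDerivAt_const _ t₀))
  have curve_a : HasDerivAt (fun a : ℝ => ((a, y t₀, t₀) : ℝ × ℝ × ℝ)) (1, 0, 0) (x t₀) :=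
    (hasDerivAt_id _).prodMk ((hasDerivAt_const _ (y t₀)).prodMk (hasDerivAt_const _ t₀))
  have hFb : HasDerivAt (fun b : ℝ => F (x t₀, b, t₀)) fy (y t₀) := by
    have := hDF.comp_hasDerivAt (y t₀) curve_b; exact this
  have hGb : HasDerivAt (fun b : ℝ => G (x t₀, b, t₀)) gy (y t₀) := by
    have := hDG.comp_hasDerivAt (y t₀) curve_b; exact this
  have hFa : HasDerivAt (fun a : ℝ => F (a, y t₀, t₀)) fx (x t₀) := by
    have := hDF.comp_hasDerivAt (x t₀) curve_a; exact this
  have hGa : HasDerivAt (fun a : ℝ => G (a, y t₀, t₀)) gx (x t₀) := by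
    have := hDG.comp_hasDerivAt (x t₀) curve_a; exact this
  have hdft : deriv (fun t : ℝ => f (x t₀) (y t₀) t) t₀ = ft := by
    simp only [hfF]
    exact (hDF.comp_hasDerivAt t₀ curve_t).deriv
  have hdgt : deriv (fun t : ℝ => g (x t₀) (y t₀) t) t₀ = gt := by
    simp only [hgG]
    exact (hDG.comp_hasDerivAt t₀ curve_t).deriv
  have hdfy : deriv (fun b : ℝ => f (x t₀) b t₀ * g (x t₀) b t₀) (y t₀) = fy * g₀ + f₀ * gy := by
    simp only [hfF, hgG]
    exact (hFb.mul hGb).deriv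
  have hdfx : deriv (fun a : ℝ => f a (y t₀) t₀ * g a (y t₀) t₀) (x t₀) = fx * g₀ + f₀ * gx := by
    simp only [hfF, hgG]
    exact (hFa.mul hGa).deriv
  -- ODE facts
  have ht₀s : t₀ ∈ s := mem_of_mem_nhds hs
  have hx'₀ : deriv x t₀ = f₀ := by rw [(hode t₀ ht₀s).1, hfF]
  have hy'₀ : deriv y t₀ = g₀ := by rw [(hode t₀ ht₀s).2, hgG]
  set u := interior s with hu_def
  have hu : u ∈ 𝓝 t₀ := interior_mem_nhds.2 hs
  have huo : IsOpen u := isOpen_interior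
  have ht₀u : t₀ ∈ u := mem_interior_iff_mem_nhds.2 hs
  have hxu : ContDiffOn ℝ 3 x u := hx.mono interior_subset
  have hyu : ContDiffOn ℝ 3 y u := hy.mono interior_subset
  have hdiffx : ∀ t ∈ u, DifferentiableAt ℝ x t := fun t ht =>
    (hxu.differentiableOn (by norm_num)).differentiableAt (huo.mem_nhds ht)
  have hdiffy : ∀ t ∈ u, DifferentiableAt ℝ y t := fun t ht =>
    (hyu.differentiableOn (by norm_num)).differentiableAt (huo.mem_nhds ht)
  have hdx2 : DifferentiableAt ℝ (deriv x) t₀ :=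
    ((hxu.deriv_of_isOpen huo h213).differentiableOn (by norm_num)).differentiableAt (huo.mem_nhds ht₀u)
  have hdy2 : DifferentiableAt ℝ (deriv y) t₀ :=
    ((hyu.deriv_of_isOpen huo h213).differentiableOn (by norm_num)).differentiableAt (huo.mem_nhds ht₀u)
  have curve_sol : HasDerivAt (fun t : ℝ => ((x t, y t, t) : ℝ × ℝ × ℝ)) (f₀, g₀, 1) t₀ := by
    have hx1 : HasDerivAt x f₀ t₀ := hx'₀ ▸ (hdiffx t₀ ht₀u).hasDerivAt
    have hy1 : HasDerivAt y g₀ t₀ := hy'₀ ▸ (hdiffy t₀ ht₀u).hasDerivAt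
    exact hx1.prodMk (hy1.prodMk (hasDerivAt_id t₀))
  have hlincomb : ∀ (L : ℝ × ℝ × ℝ →L[ℝ] ℝ) (a b c : ℝ),
      L (a, b, c) = a * L (1, 0, 0) + b * L (0, 1, 0) + c * L (0, 0, 1) := by
    intro L a b c
    have habc : ((a, b, c) : ℝ × ℝ × ℝ)
        = a • ((1, 0, 0) : ℝ × ℝ × ℝ) + b • (0, 1, 0) + c • (0, 0, 1) := by
      simp [Prod.ext_iff]
    rw [habc, map_add, map_add, map_smul, map_smul, map_smul, smul_eq_mul, smul_eq_mul,
      smul_eq_mul]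
  have hxdd : deriv (deriv x) t₀ = fx * f₀ + fy * g₀ + ft := by
    have heq : deriv x =ᶠ[𝓝 t₀] fun t => F (x t, y t, t) := by
      filter_upwards [hs] with t ht
      rw [(hode t ht).1, hfF]
    have hcd : HasDerivAt (fun t : ℝ => F (x t, y t, t)) (DF (f₀, g₀, 1)) t₀ := by
      have := hDF.comp_hasDerivAt t₀ curve_sol; exact this
    rw [heq.deriv_eq, hcd.deriv, hlincomb DF f₀ g₀ 1]
    ring
  have hydd : deriv (deriv y) t₀ = gx * f₀ + gy * g₀ + gt := by
    have heq : deriv y =ᶠ[𝓝 t₀] fun t => G (x t, y t, t) := by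
      filter_upwards [hs] with t ht
      rw [(hode t ht).2, hgG]
    have hcd : HasDerivAt (fun t : ℝ => G (x t, y t, t)) (DG (f₀, g₀, 1)) t₀ := by
      have := hDG.comp_hasDerivAt t₀ curve_sol; exact this
    rw [heq.deriv_eq, hcd.deriv, hlincomb DG f₀ g₀ 1]
    ring
  have TX : (fun h : ℝ => x (t₀ + h) - x t₀ - h * f₀ - h ^ 2 / 2 * (fx * f₀ + fy * g₀ + ft))
      =o[𝓝 0] fun h : ℝ => h ^ 2 := by
    have := taylor2 hu hdiffx hdx2.hasDerivAt
    simp only [hx'₀, hxdd] at this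
    exact this
  have TY : (fun h : ℝ => y (t₀ + h) - y t₀ - h * g₀ - h ^ 2 / 2 * (gx * f₀ + gy * g₀ + gt))
      =o[𝓝 0] fun h : ℝ => h ^ 2 := by
    have := taylor2 hu hdiffy hdy2.hasDerivAt
    simp only [hy'₀, hydd] at this
    exact this
  -- the numerical method expansion
  set c : ℝ → ℝ × ℝ × ℝ := fun h => (X h, y t₀, t₀ + α * h) with hc
  have hctend : Tendsto c (𝓝 0) (𝓝 p₀) := by
    rw [hp₀]
    have h1 : Tendsto X (𝓝 0) (𝓝 (x t₀)) := hX0 ▸ hXc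
    have h3 : Tendsto (fun h : ℝ => t₀ + α * h) (𝓝 0) (𝓝 t₀) := by
      have hcont : Continuous (fun h : ℝ => t₀ + α * h) := by fun_prop
      simpa using hcont.tendsto (0 : ℝ)
    exact h1.prodMk_nhds (tendsto_const_nhds.prodMk_nhds h3)
  have hXeqF : ∀ᶠ h in 𝓝 (0 : ℝ), X h = x t₀ + h * F (c h) := by
    filter_upwards [hXeq] with h hh
    rw [hh, hfF, hc]
  have E1 : (fun h : ℝ => X h - x t₀ - h * f₀) =o[𝓝 0] fun h : ℝ => h := by
    have hsm : Tendsto (fun h : ℝ => F (c h) - f₀) (𝓝 0) (𝓝 0) := by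
      have := ((hFC.continuous.tendsto p₀).comp hctend).sub_const f₀
      simpa [Function.comp_def, hf₀] using this
    have hlo := (isBigO_refl (fun h : ℝ => h) (𝓝 0)).mul_isLittleO
      ((isLittleO_one_iff ℝ).2 hsm)
    refine hlo.congr' ?_ ?_
    · filter_upwards [hXeqF] with h hh
      rw [hh]; ring
    · filter_upwards with h; simp
  have hXO : (fun h : ℝ => X h - x t₀) =O[𝓝 0] fun h : ℝ => h := by
    have h2 : (fun h : ℝ => h * f₀) =O[𝓝 0] fun h : ℝ => h := by
      simpa [mul_comm] using (isBigO_refl (fun h : ℝ => h) (𝓝 0)).const_mul_left f₀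
    refine (E1.isBigO.add h2).congr_left fun h => ?_
    ring
  have hcO : (fun h : ℝ => c h - p₀) =O[𝓝 0] fun h : ℝ => h := by
    have h3 : (fun h : ℝ => α * h) =O[𝓝 0] fun h : ℝ => h :=
      (isBigO_refl _ _).const_mul_left α
    have h2 : (fun _ : ℝ => (0 : ℝ)) =O[𝓝 0] fun h : ℝ => h := isBigO_zero _ _
    refine (hXO.prod_left (h2.prod_left h3)).congr_left fun h => ?_
    simp [hc, hp₀, Prod.ext_iff]
  have hr : (fun h : ℝ => F (c h) - f₀ - (fx * (X h - x t₀) + ft * (α * h)))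
      =o[𝓝 0] fun h : ℝ => h := by
    have hcomp := (hDF.isLittleO.comp_tendsto hctend).trans_isBigO hcO
    simp only [Function.comp_def] at hcomp
    refine hcomp.congr_left fun h => ?_
    have hsub : c h - p₀ = (X h - x t₀) • ((1, 0, 0) : ℝ × ℝ × ℝ)
        + (α * h) • ((0, 0, 1) : ℝ × ℝ × ℝ) := by
      simp [hc, hp₀, Prod.ext_iff]
    rw [hsub, map_add, map_smul, map_smul, smul_eq_mul, smul_eq_mul]
    ring
  have hrG : (fun h : ℝ => G (c h) - g₀ - (gx * (X h - x t₀) + gt * (α * h)))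
      =o[𝓝 0] fun h : ℝ => h := by
    have hcomp := (hDG.isLittleO.comp_tendsto hctend).trans_isBigO hcO
    simp only [Function.comp_def] at hcomp
    refine hcomp.congr_left fun h => ?_
    have hsub : c h - p₀ = (X h - x t₀) • ((1, 0, 0) : ℝ × ℝ × ℝ)
        + (α * h) • ((0, 0, 1) : ℝ × ℝ × ℝ) := by
      simp [hc, hp₀, Prod.ext_iff]
    rw [hsub, map_add, map_smul, map_smul, smul_eq_mul, smul_eq_mul]
    ring
  have EX : (fun h : ℝ => X h - x t₀ - h * f₀ - (fx * f₀ + α * ft) * h ^ 2)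
      =o[𝓝 0] fun h : ℝ => h ^ 2 := by
    have p1 := (isBigO_refl (fun h : ℝ => h) (𝓝 0)).mul_isLittleO (E1.const_mul_left fx)
    have p2 := (isBigO_refl (fun h : ℝ => h) (𝓝 0)).mul_isLittleO hr
    refine (p1.add p2).congr' ?_ ?_
    · filter_upwards [hXeqF] with h hh
      rw [hh]; ring
    · filter_upwards with h; ring
  have EY : (fun h : ℝ => Y h - y t₀ - h * g₀ - (gx * f₀ + α * gt) * h ^ 2)
      =o[𝓝 0] fun h : ℝ => h ^ 2 := by
    have p1 := (isBigO_refl (fun h : ℝ => h) (𝓝 0)).mul_isLittleO (E1.const_mul_left gx)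
    have p2 := (isBigO_refl (fun h : ℝ => h) (𝓝 0)).mul_isLittleO hrG
    refine (p1.add p2).congr' ?_ ?_
    · filter_upwards with h
      rw [hYdef h, hgG]
      simp only [hc]
      ring
    · filter_upwards with h; ring
  have hgyfx : gy = -fx := by rw [hsym]; ring
  constructor
  · refine (EX.sub TX).congr_left fun h => ?_
    rw [hdfy, hdft, hgyfx]
    ring
  · refine (EY.sub TY).congr_left fun h => ?_
    rw [hdfx, hdgt, hgyfx]
    ring
end

section
/- Let H : ℝ × ℝ × ℝ → ℝ (arguments (x, y, t)) be such that H(·,·,τ₁) and H(·,·,τ₂) are twice continuously differentiable for the two fixed times τ₁, τ₂, set f = ∂H/∂y and g = −∂H/∂x, and let h ∈ ℝ. Suppose φ = (X₂, Y₂) : ℝ × ℝ → ℝ × ℝ is differentiable and there are differentiable functions X₁, Y₁ : ℝ × ℝ → ℝ such that, for all (x₀, y₀): X₁ = x₀ + (h/2)·f(X₁, y₀, τ₁), Y₁ = y₀ + (h/2)·g(X₁, y₀, τ₁), Y₂ = Y₁ + (h/2)·g(X₁, Y₂, τ₂), and X₂ = X₁ + (h/2)·f(X₁, Y₂, τ₂).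 Then the determinant of the Fréchet derivative of φ equals 1 at every point; i.e., the implicit second-order method (6.1) applied to a Hamiltonian system preserves area. -/
open ContinuousLinearMap in
/-- Derivative of `q ↦ ∂F(u q) v₀` via the second derivative of `F`. -/
lemma aux_hasFDerivAt_eval (F : ℝ × ℝ → ℝ) (hF : ContDiff ℝ 2 F)
    (u : ℝ × ℝ → ℝ × ℝ) (U : ℝ × ℝ →L[ℝ] ℝ × ℝ) (p : ℝ × ℝ)
    (hu : HasFDerivAt u U p) (v₀ : ℝ × ℝ) :
    HasFDerivAt (fun q => fderiv ℝ F (u q) v₀)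
      ((ContinuousLinearMap.apply ℝ ℝ v₀).comp
        ((fderiv ℝ (fderiv ℝ F) (u p)).comp U)) p := by
  have hD : Differentiable ℝ (fderiv ℝ F) :=
    (hF.fderiv_right (m := 1) (by norm_num)).differentiable one_ne_zero
  exact (ContinuousLinearMap.apply ℝ ℝ v₀).hasFDerivAt.comp p
    ((hD (u p)).hasFDerivAt.comp p hu)

/-- Determinant of the prod of two scalar-valued CLMs on `ℝ × ℝ`. -/
lemma aux_det_prod (T U : ℝ × ℝ →L[ℝ] ℝ) :
    (T.prod U).det = T (1, 0) * U (0, 1) - T (0, 1) * U (1, 0) := by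
  have : (T.prod U).det = LinearMap.det ((T.prod U) : ℝ × ℝ →ₗ[ℝ] ℝ × ℝ) := rfl
  rw [this, ← LinearMap.det_toMatrix (Module.Basis.finTwoProd ℝ), Matrix.det_fin_two]
  simp [LinearMap.toMatrix_apply, Module.Basis.finTwoProd_zero, Module.Basis.finTwoProd_one,
    Module.Basis.coe_finTwoProd_repr]

/-- Bilinear expansion of a second derivative on `ℝ × ℝ`. -/
lemma aux_bilin (S : ℝ × ℝ →L[ℝ] (ℝ × ℝ →L[ℝ] ℝ)) (s t : ℝ) (w : ℝ × ℝ) :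
    S (s, t) w = s * S (1, 0) w + t * S (0, 1) w := by
  have hst : ((s, t) : ℝ × ℝ) = s • ((1 : ℝ), (0 : ℝ)) + t • ((0 : ℝ), (1 : ℝ)) := by
    simp [Prod.ext_iff]
  rw [hst, map_add, map_smul, map_smul]
  simp

set_option maxHeartbeats 1000000 in
/-- The implicit second-order method (6.1) for a Hamiltonian system
(`f = ∂H/∂y`, `g = −∂H/∂x`) preserves area: with
`X₁ = x₀ + (h/2)·f(X₁, y₀, τ₁)`, `Y₁ = y₀ + (h/2)·g(X₁, y₀, τ₁)`,
`Y₂ = Y₁ + (h/2)·g(X₁, Y₂, τ₂)`, `X₂ = X₁ + (h/2)·f(X₁, Y₂, τ₂)`,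
and `φ = (X₂, Y₂)` differentiable, the Jacobian determinant of `φ` equals `1`
everywhere. -/
theorem deVogelaere_method_6_1_area_preserving
    (H : ℝ × ℝ × ℝ → ℝ) (τ₁ τ₂ : ℝ)
    (hH₁ : ContDiff ℝ 2 (fun p : ℝ × ℝ => H (p.1, p.2, τ₁)))
    (hH₂ : ContDiff ℝ 2 (fun p : ℝ × ℝ => H (p.1, p.2, τ₂)))
    (f g : ℝ → ℝ → ℝ → ℝ)
    (hfdef : ∀ a b t : ℝ, f a b t = deriv (fun y => H (a, y, t)) b)
    (hgdef : ∀ a b t : ℝ, g a b t = - deriv (fun u => H (u, b, t)) a)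
    (h : ℝ)
    (X₁ Y₁ X₂ Y₂ : ℝ × ℝ → ℝ)
    (hX₁d : Differentiable ℝ X₁) (hY₁d : Differentiable ℝ Y₁)
    (hφ : Differentiable ℝ (fun p : ℝ × ℝ => (X₂ p, Y₂ p)))
    (hX₁ : ∀ p : ℝ × ℝ, X₁ p = p.1 + h / 2 * f (X₁ p) p.2 τ₁)
    (hY₁ : ∀ p : ℝ × ℝ, Y₁ p = p.2 + h / 2 * g (X₁ p) p.2 τ₁)
    (hY₂ : ∀ p : ℝ × ℝ, Y₂ p = Y₁ p + h / 2 * g (X₁ p) (Y₂ p) τ₂)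
    (hX₂ : ∀ p : ℝ × ℝ, X₂ p = X₁ p + h / 2 * f (X₁ p) (Y₂ p) τ₂) :
    ∀ p : ℝ × ℝ, (fderiv ℝ (fun q : ℝ × ℝ => (X₂ q, Y₂ q)) p).det = 1 := by
  set c : ℝ := h / 2 with hc
  set F₁ : ℝ × ℝ → ℝ := fun q => H (q.1, q.2, τ₁) with hF₁def
  set F₂ : ℝ × ℝ → ℝ := fun q => H (q.1, q.2, τ₂) with hF₂def
  have hF₁d : Differentiable ℝ F₁ := hH₁.differentiable two_ne_zero
  have hF₂d : Differentiable ℝ F₂ := hH₂.differentiable two_ne_zero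
  have hD₁d : Differentiable ℝ (fderiv ℝ F₁) :=
    (hH₁.fderiv_right (m := 1) (by norm_num)).differentiable one_ne_zero
  have hD₂d : Differentiable ℝ (fderiv ℝ F₂) :=
    (hH₂.fderiv_right (m := 1) (by norm_num)).differentiable one_ne_zero
  -- rewrite f and g in terms of fderiv of the frozen Hamiltonians
  have hf₁ : ∀ a b : ℝ, f a b τ₁ = fderiv ℝ F₁ (a, b) (0, 1) := by
    intro a b
    rw [hfdef]
    have h1 : HasDerivAt (fun y : ℝ => F₁ (a, y)) (fderiv ℝ F₁ (a, b) (0, 1)) b :=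
      (hF₁d (a, b)).hasFDerivAt.comp_hasDerivAt b
        (HasDerivAt.prodMk (hasDerivAt_const b a) (hasDerivAt_id b))
    exact h1.deriv
  have hf₂ : ∀ a b : ℝ, f a b τ₂ = fderiv ℝ F₂ (a, b) (0, 1) := by
    intro a b
    rw [hfdef]
    have h1 : HasDerivAt (fun y : ℝ => F₂ (a, y)) (fderiv ℝ F₂ (a, b) (0, 1)) b :=
      (hF₂d (a, b)).hasFDerivAt.comp_hasDerivAt b
        (HasDerivAt.prodMk (hasDerivAt_const b a) (hasDerivAt_id b))
    exact h1.deriv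
  have hg₁ : ∀ a b : ℝ, g a b τ₁ = -(fderiv ℝ F₁ (a, b) (1, 0)) := by
    intro a b
    rw [hgdef]
    have h1 : HasDerivAt (fun u : ℝ => F₁ (u, b)) (fderiv ℝ F₁ (a, b) (1, 0)) a :=
      HasFDerivAt.comp_hasDerivAt (l := F₁) (l' := fderiv ℝ F₁ (a, b)) a (hF₁d (a, b)).hasFDerivAt
        (HasDerivAt.prodMk (hasDerivAt_id' a) (hasDerivAt_const a b))
    rw [h1.deriv]
  have hg₂ : ∀ a b : ℝ, g a b τ₂ = -(fderiv ℝ F₂ (a, b) (1, 0)) := by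
    intro a b
    rw [hgdef]
    have h1 : HasDerivAt (fun u : ℝ => F₂ (u, b)) (fderiv ℝ F₂ (a, b) (1, 0)) a :=
      HasFDerivAt.comp_hasDerivAt (l := F₂) (l' := fderiv ℝ F₂ (a, b)) a (hF₂d (a, b)).hasFDerivAt
        (HasDerivAt.prodMk (hasDerivAt_id' a) (hasDerivAt_const a b))
    rw [h1.deriv]
  -- differentiability of the components of φ
  have hX₂d : Differentiable ℝ X₂ := hφ.fst
  have hY₂d : Differentiable ℝ Y₂ := hφ.snd
  intro p
  -- notation for first derivatives at p
  set A : ℝ × ℝ →L[ℝ] ℝ := fderiv ℝ X₁ p with hA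
  set Dd : ℝ × ℝ →L[ℝ] ℝ := fderiv ℝ Y₁ p with hDd
  set B : ℝ × ℝ →L[ℝ] ℝ := fderiv ℝ Y₂ p with hB
  set Ee : ℝ × ℝ →L[ℝ] ℝ := fderiv ℝ X₂ p with hEe
  set z₁ : ℝ × ℝ := (X₁ p, p.2) with hz₁
  set z₂ : ℝ × ℝ := (X₁ p, Y₂ p) with hz₂
  set S₁ : ℝ × ℝ →L[ℝ] (ℝ × ℝ →L[ℝ] ℝ) := fderiv ℝ (fderiv ℝ F₁) z₁ with hS₁
  set S₂ : ℝ × ℝ →L[ℝ] (ℝ × ℝ →L[ℝ] ℝ) := fderiv ℝ (fderiv ℝ F₂) z₂ with hS₂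
  have hsym₁ : ∀ v w, S₁ v w = S₁ w v :=
    second_derivative_symmetric (fun y => (hF₁d y).hasFDerivAt) (hD₁d z₁).hasFDerivAt
  have hsym₂ : ∀ v w, S₂ v w = S₂ w v :=
    second_derivative_symmetric (fun y => (hF₂d y).hasFDerivAt) (hD₂d z₂).hasFDerivAt
  -- derivatives of the inner maps
  have hu₁ : HasFDerivAt (fun q : ℝ × ℝ => (X₁ q, q.2))
      (A.prod (ContinuousLinearMap.snd ℝ ℝ ℝ)) p :=
    HasFDerivAt.prodMk (hX₁d p).hasFDerivAt hasFDerivAt_snd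
  have hu₂ : HasFDerivAt (fun q : ℝ × ℝ => (X₁ q, Y₂ q)) (A.prod B) p :=
    HasFDerivAt.prodMk (hX₁d p).hasFDerivAt (hY₂d p).hasFDerivAt
  set U₁ : ℝ × ℝ →L[ℝ] ℝ × ℝ := A.prod (ContinuousLinearMap.snd ℝ ℝ ℝ) with hU₁
  set U₂ : ℝ × ℝ →L[ℝ] ℝ × ℝ := A.prod B with hU₂
  -- equation 1 : X₁ q = q.1 + c * f (X₁ q) q.2 τ₁
  have hL1 := aux_hasFDerivAt_eval F₁ hH₁ (fun q : ℝ × ℝ => (X₁ q, q.2)) U₁ p hu₁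
    ((0 : ℝ), (1 : ℝ))
  have hE1 : HasFDerivAt X₁
      ((ContinuousLinearMap.fst ℝ ℝ ℝ) +
        c • ((ContinuousLinearMap.apply ℝ ℝ ((0 : ℝ), (1 : ℝ))).comp (S₁.comp U₁))) p := by
    have := (hasFDerivAt_fst (p := p)).add (hL1.const_mul c)
    exact this.congr_of_eventuallyEq
      (Filter.Eventually.of_forall fun q => by rw [hX₁ q, hf₁]; rfl)
  have hAeq := (hX₁d p).hasFDerivAt.unique hE1
  have E1 : ∀ v : ℝ × ℝ, A v = v.1 + c * (A v * S₁ (1, 0) (0, 1) + v.2 * S₁ (0, 1) (0, 1)) := by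
    intro v
    have h0 := DFunLike.congr_fun hAeq v
    simp only [hU₁, ContinuousLinearMap.add_apply, ContinuousLinearMap.coe_fst',
      ContinuousLinearMap.coe_smul', Pi.smul_apply, ContinuousLinearMap.comp_apply,
      ContinuousLinearMap.prod_apply, ContinuousLinearMap.coe_snd',
      ContinuousLinearMap.apply_apply, smul_eq_mul] at h0
    rw [aux_bilin] at h0
    exact h0
  -- equation 2 : Y₁ q = q.2 + c * g (X₁ q) q.2 τ₁
  have hL2 := aux_hasFDerivAt_eval F₁ hH₁ (fun q : ℝ × ℝ => (X₁ q, q.2)) U₁ p hu₁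
    ((1 : ℝ), (0 : ℝ))
  have hE2 : HasFDerivAt Y₁
      ((ContinuousLinearMap.snd ℝ ℝ ℝ) +
        c • (-((ContinuousLinearMap.apply ℝ ℝ ((1 : ℝ), (0 : ℝ))).comp (S₁.comp U₁)))) p := by
    have := (hasFDerivAt_snd (p := p)).add ((hL2.neg).const_mul c)
    exact this.congr_of_eventuallyEq
      (Filter.Eventually.of_forall fun q => by rw [hY₁ q, hg₁]; rfl)
  have hDeq := (hY₁d p).hasFDerivAt.unique hE2
  have E2 : ∀ v : ℝ × ℝ,
      Dd v = v.2 + c * (-(A v * S₁ (1, 0) (1, 0) + v.2 * S₁ (0, 1) (1, 0))) := by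
    intro v
    have h0 := DFunLike.congr_fun hDeq v
    simp only [hU₁, ContinuousLinearMap.add_apply, ContinuousLinearMap.coe_snd',
      ContinuousLinearMap.coe_smul', Pi.smul_apply, ContinuousLinearMap.neg_apply,
      ContinuousLinearMap.comp_apply, ContinuousLinearMap.prod_apply,
      ContinuousLinearMap.coe_fst', ContinuousLinearMap.apply_apply, smul_eq_mul] at h0
    rw [aux_bilin] at h0
    exact h0
  -- equation 3 : Y₂ q = Y₁ q + c * g (X₁ q) (Y₂ q) τ₂
  have hL3 := aux_hasFDerivAt_eval F₂ hH₂ (fun q : ℝ × ℝ => (X₁ q, Y₂ q)) U₂ p hu₂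
    ((1 : ℝ), (0 : ℝ))
  have hE3 : HasFDerivAt Y₂
      (Dd + c • (-((ContinuousLinearMap.apply ℝ ℝ ((1 : ℝ), (0 : ℝ))).comp (S₂.comp U₂)))) p := by
    have := ((hY₁d p).hasFDerivAt).add ((hL3.neg).const_mul c)
    exact this.congr_of_eventuallyEq
      (Filter.Eventually.of_forall fun q => by rw [hY₂ q, hg₂]; rfl)
  have hBeq := (hY₂d p).hasFDerivAt.unique hE3
  have E3 : ∀ v : ℝ × ℝ,
      B v = Dd v + c * (-(A v * S₂ (1, 0) (1, 0) + B v * S₂ (0, 1) (1, 0))) := by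
    intro v
    have h0 := DFunLike.congr_fun hBeq v
    simp only [hU₂, ContinuousLinearMap.add_apply, ContinuousLinearMap.coe_smul', Pi.smul_apply,
      ContinuousLinearMap.neg_apply, ContinuousLinearMap.comp_apply,
      ContinuousLinearMap.prod_apply, ContinuousLinearMap.apply_apply, smul_eq_mul] at h0
    rw [aux_bilin] at h0
    exact h0
  -- equation 4 : X₂ q = X₁ q + c * f (X₁ q) (Y₂ q) τ₂
  have hL4 := aux_hasFDerivAt_eval F₂ hH₂ (fun q : ℝ × ℝ => (X₁ q, Y₂ q)) U₂ p hu₂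
    ((0 : ℝ), (1 : ℝ))
  have hE4 : HasFDerivAt X₂
      (A + c • ((ContinuousLinearMap.apply ℝ ℝ ((0 : ℝ), (1 : ℝ))).comp (S₂.comp U₂))) p := by
    have := ((hX₁d p).hasFDerivAt).add (hL4.const_mul c)
    exact this.congr_of_eventuallyEq
      (Filter.Eventually.of_forall fun q => by rw [hX₂ q, hf₂]; rfl)
  have hEeq := (hX₂d p).hasFDerivAt.unique hE4
  have E4 : ∀ v : ℝ × ℝ,
      Ee v = A v + c * (A v * S₂ (1, 0) (0, 1) + B v * S₂ (0, 1) (0, 1)) := by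
    intro v
    have h0 := DFunLike.congr_fun hEeq v
    simp only [hU₂, ContinuousLinearMap.add_apply, ContinuousLinearMap.coe_smul', Pi.smul_apply,
      ContinuousLinearMap.comp_apply, ContinuousLinearMap.prod_apply,
      ContinuousLinearMap.apply_apply, smul_eq_mul] at h0
    rw [aux_bilin] at h0
    exact h0
  -- the Jacobian determinant
  have hdet : fderiv ℝ (fun q : ℝ × ℝ => (X₂ q, Y₂ q)) p = Ee.prod B :=
    (HasFDerivAt.prodMk (hX₂d p).hasFDerivAt (hY₂d p).hasFDerivAt).fderiv
  rw [hdet, aux_det_prod]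
  -- scalar notation
  set Qa : ℝ := S₁ (1, 0) (0, 1)
  set Qb : ℝ := S₁ (0, 1) (1, 0)
  set Pc : ℝ := S₁ (1, 0) (1, 0)
  set Rc : ℝ := S₁ (0, 1) (0, 1)
  set Qa' : ℝ := S₂ (1, 0) (0, 1)
  set Qb' : ℝ := S₂ (0, 1) (1, 0)
  set Pc' : ℝ := S₂ (1, 0) (1, 0)
  set Rc' : ℝ := S₂ (0, 1) (0, 1)
  have hQ : Qa = Qb := hsym₁ (1, 0) (0, 1)
  have hQ' : Qa' = Qb' := hsym₂ (1, 0) (0, 1)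
  set a₁ : ℝ := A (1, 0)
  set a₂ : ℝ := A (0, 1)
  set d₁ : ℝ := Dd (1, 0)
  set d₂ : ℝ := Dd (0, 1)
  set b₁ : ℝ := B (1, 0)
  set b₂ : ℝ := B (0, 1)
  set x₁ : ℝ := Ee (1, 0)
  set x₂ : ℝ := Ee (0, 1)
  have ha1 : a₁ = 1 + c * (a₁ * Qa + 0 * Rc) := E1 (1, 0)
  have ha2 : a₂ = 0 + c * (a₂ * Qa + 1 * Rc) := E1 (0, 1)
  have hd1 : d₁ = 0 + c * (-(a₁ * Pc + 0 * Qb)) := E2 (1, 0)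
  have hd2 : d₂ = 1 + c * (-(a₂ * Pc + 1 * Qb)) := E2 (0, 1)
  have hb1 : b₁ = d₁ + c * (-(a₁ * Pc' + b₁ * Qb')) := E3 (1, 0)
  have hb2 : b₂ = d₂ + c * (-(a₂ * Pc' + b₂ * Qb')) := E3 (0, 1)
  have hx1 : x₁ = a₁ + c * (a₁ * Qa' + b₁ * Rc') := E4 (1, 0)
  have hx2 : x₂ = a₂ + c * (a₂ * Qa' + b₂ * Rc') := E4 (0, 1)
  have k1 : x₁ * b₂ - x₂ * b₁ = (1 + c * Qa') * (a₁ * b₂ - a₂ * b₁) := by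
    linear_combination b₂ * hx1 - b₁ * hx2
  have k2 : (1 + c * Qb') * (a₁ * b₂ - a₂ * b₁) = a₁ * d₂ - a₂ * d₁ := by
    linear_combination a₁ * hb2 - a₂ * hb1
  have k3 : a₁ * d₂ - a₂ * d₁ = a₁ * (1 - c * Qb) := by
    linear_combination a₁ * hd2 - a₂ * hd1
  have k4 : a₁ * (1 - c * Qa) = 1 := by linear_combination ha1
  calc x₁ * b₂ - x₂ * b₁ = (1 + c * Qa') * (a₁ * b₂ - a₂ * b₁) := k1
    _ = (1 + c * Qb') * (a₁ * b₂ - a₂ * b₁) := by rw [hQ']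
    _ = a₁ * d₂ - a₂ * d₁ := k2
    _ = a₁ * (1 - c * Qb) := k3
    _ = a₁ * (1 - c * Qa) := by rw [hQ]
    _ = 1 := k4
end

section
/- Let n ∈ ℕ, let H : (EuclideanSpace ℝ (Fin n)) × (EuclideanSpace ℝ (Fin n)) → ℝ be twice continuously differentiable (arguments (q, p); the time is a fixed parameter absorbed into H), let h ∈ ℝ, and denote by ∇₁H and ∇₂H the gradients of H with respect to its first and second argument. Suppose φ = (Q, P) : ℝⁿ × ℝⁿ → ℝⁿ × ℝⁿ is differentiable and satisfies, for all (α, β): Q(α, β) = α + h·∇₂H(Q(α, β), β) and P(α, β) = β − h·∇₁H(Q(α, β), β). Then φ is a contact (canonical/symplectic) transformation: for every point z and all tangent vectors u = (u₁, u₂), v = (v₁, v₂) in ℝⁿ × ℝⁿ, ω(Dφ(z)u, Dφ(z)v) = ω(u, v), where ω((a, b), (a', b')) = ⟨a, b'⟩ − ⟨b, a'⟩ is the standard symplectic form. -/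
open RealInnerProductSpace ContinuousLinearMap

section Aux

variable {E : Type*} [NormedAddCommGroup E] [InnerProductSpace ℝ E] [CompleteSpace E]

/-- inner with partial gradient = full fderiv applied in second slot -/
lemma grad_snd_aux' (H : E × E → ℝ) (hHd : Differentiable ℝ H) (a b y : E) :
    ⟪y, gradient (fun p => H (a, p)) b⟫ = fderiv ℝ H (a, b) (0, y) := by
  have h1 : HasFDerivAt (fun p => H (a, p))
      ((fderiv ℝ H (a, b)).comp (inr ℝ E E)) b :=
    (hHd (a, b)).hasFDerivAt.comp b (hasFDerivAt_prodMk_right a b)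
  have h2 := (hasFDerivAt_iff_hasGradientAt.mp h1).gradient
  rw [h2, real_inner_comm, InnerProductSpace.toDual_symm_apply]
  simp

lemma grad_fst_aux' (H : E × E → ℝ) (hHd : Differentiable ℝ H) (a b y : E) :
    ⟪y, gradient (fun q => H (q, b)) a⟫ = fderiv ℝ H (a, b) (y, 0) := by
  have h1 : HasFDerivAt (fun q => H (q, b))
      ((fderiv ℝ H (a, b)).comp (inl ℝ E E)) a :=
    (hHd (a, b)).hasFDerivAt.comp a (hasFDerivAt_prodMk_left a b)
  have h2 := (hasFDerivAt_iff_hasGradientAt.mp h1).gradient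
  rw [h2, real_inner_comm, InnerProductSpace.toDual_symm_apply]
  simp

lemma contact_aux
    (H : E × E → ℝ)
    (hH : ContDiff ℝ 2 H) (h : ℝ)
    (Q P : E × E → E)
    (hφ : Differentiable ℝ (fun z : E × E => (Q z, P z)))
    (hQ : ∀ z : E × E, Q z = z.1 + h • gradient (fun p => H (Q z, p)) z.2)
    (hP : ∀ z : E × E, P z = z.2 - h • gradient (fun q => H (q, z.2)) (Q z)) :
    ∀ (z u v : E × E),
      ⟪(fderiv ℝ (fun w => (Q w, P w)) z u).1, (fderiv ℝ (fun w => (Q w, P w)) z v).2⟫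
        - ⟪(fderiv ℝ (fun w => (Q w, P w)) z u).2,
            (fderiv ℝ (fun w => (Q w, P w)) z v).1⟫
      = ⟪u.1, v.2⟫ - ⟪u.2, v.1⟫ := by
  intro z u v
  have hHd : Differentiable ℝ H := hH.differentiable two_ne_zero
  have hQd : Differentiable ℝ Q := hφ.fst
  have hPd : Differentiable ℝ P := hφ.snd
  have hDpair : fderiv ℝ (fun w => (Q w, P w)) z
      = (fderiv ℝ Q z).prod (fderiv ℝ P z) :=
    DifferentiableAt.fderiv_prodMk (hQd z) (hPd z)
  rw [hDpair]
  simp only [ContinuousLinearMap.prod_apply]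
  -- derivative of ψ w = (Q w, w.2)
  have hψ : HasFDerivAt (fun w : E × E => (Q w, w.2))
      ((fderiv ℝ Q z).prod (snd ℝ E E)) z :=
    (hQd z).hasFDerivAt.prodMk (hasFDerivAt_snd)
  have hD1 : ContDiff ℝ 1 (fderiv ℝ H) := hH.fderiv_right (by norm_num)
  set L := fderiv ℝ (fderiv ℝ H) (Q z, z.2) with hLdef
  have hL : HasFDerivAt (fderiv ℝ H) L (Q z, z.2) :=
    ((hD1.differentiable one_ne_zero) _).hasFDerivAt
  have hsymm : ∀ a b : E × E, L a b = L b a :=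
    fun a b => (hH.contDiffAt.isSymmSndFDerivAt minSmoothness_of_isRCLikeNormedField.le) a b
  -- derivative of w ↦ fderiv ℝ H (Q w, w.2)
  have hF : HasFDerivAt (fun w : E × E => fderiv ℝ H (Q w, w.2))
      (L.comp ((fderiv ℝ Q z).prod (snd ℝ E E))) z := by
    have := ((hD1.differentiable one_ne_zero) (Q z, z.2)).hasFDerivAt
    exact this.comp z hψ
  -- key identity for Q
  have keyQ : ∀ (y : E) (u : E × E),
      ⟪y, fderiv ℝ Q z u⟫ = ⟪y, u.1⟫ + h * L (fderiv ℝ Q z u, u.2) (0, y) := by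
    intro y u
    have h1 : HasFDerivAt (fun w : E × E => ⟪y, Q w⟫)
        ((innerSL ℝ y).comp (fderiv ℝ Q z)) z :=
      (innerSL ℝ y).hasFDerivAt.comp z (hQd z).hasFDerivAt
    have h2 : HasFDerivAt (fun w : E × E => ⟪y, w.1⟫ + h * (fderiv ℝ H (Q w, w.2)) ((0 : E), y))
        (((innerSL ℝ y).comp (fst ℝ E E)) +
          h • ((ContinuousLinearMap.apply ℝ ℝ ((0 : E), y)).comp
            (L.comp ((fderiv ℝ Q z).prod (snd ℝ E E))))) z := by
      have ha : HasFDerivAt (fun w : E × E => ⟪y, w.1⟫)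
          ((innerSL ℝ y).comp (fst ℝ E E)) z :=
        ((innerSL ℝ y).comp (fst ℝ E E)).hasFDerivAt
      have hb : HasFDerivAt (fun w : E × E => (fderiv ℝ H (Q w, w.2)) ((0 : E), y))
          ((ContinuousLinearMap.apply ℝ ℝ ((0 : E), y)).comp
            (L.comp ((fderiv ℝ Q z).prod (snd ℝ E E)))) z :=
        (ContinuousLinearMap.apply ℝ ℝ ((0 : E), y)).hasFDerivAt.comp z hF
      exact ha.add (hb.const_mul h)
    have heq : (fun w : E × E => ⟪y, Q w⟫)
        = fun w : E × E => ⟪y, w.1⟫ + h * (fderiv ℝ H (Q w, w.2)) ((0 : E), y) := by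
      funext w
      conv_lhs => rw [hQ w]
      rw [inner_add_right, real_inner_smul_right, grad_snd_aux' H hHd]
    have huniq := h1.unique (heq ▸ h2)
    have := congrArg (fun (T : (E × E) →L[ℝ] ℝ) => T u) huniq
    simpa using this
  have keyP : ∀ (y : E) (u : E × E),
      ⟪y, fderiv ℝ P z u⟫ = ⟪y, u.2⟫ - h * L (fderiv ℝ Q z u, u.2) (y, 0) := by
    intro y u
    have h1 : HasFDerivAt (fun w : E × E => ⟪y, P w⟫)
        ((innerSL ℝ y).comp (fderiv ℝ P z)) z :=
      (innerSL ℝ y).hasFDerivAt.comp z (hPd z).hasFDerivAt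
    have h2 : HasFDerivAt (fun w : E × E => ⟪y, w.2⟫ - h * (fderiv ℝ H (Q w, w.2)) (y, (0 : E)))
        (((innerSL ℝ y).comp (snd ℝ E E)) -
          h • ((ContinuousLinearMap.apply ℝ ℝ (y, (0 : E))).comp
            (L.comp ((fderiv ℝ Q z).prod (snd ℝ E E))))) z := by
      have ha : HasFDerivAt (fun w : E × E => ⟪y, w.2⟫)
          ((innerSL ℝ y).comp (snd ℝ E E)) z :=
        ((innerSL ℝ y).comp (snd ℝ E E)).hasFDerivAt
      have hb : HasFDerivAt (fun w : E × E => (fderiv ℝ H (Q w, w.2)) (y, (0 : E)))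
          ((ContinuousLinearMap.apply ℝ ℝ (y, (0 : E))).comp
            (L.comp ((fderiv ℝ Q z).prod (snd ℝ E E)))) z :=
        (ContinuousLinearMap.apply ℝ ℝ (y, (0 : E))).hasFDerivAt.comp z hF
      exact ha.sub (hb.const_mul h)
    have heq : (fun w : E × E => ⟪y, P w⟫)
        = fun w : E × E => ⟪y, w.2⟫ - h * (fderiv ℝ H (Q w, w.2)) (y, (0 : E)) := by
      funext w
      conv_lhs => rw [hP w]
      rw [inner_sub_right, real_inner_smul_right, grad_fst_aux' H hHd]
    have huniq := h1.unique (heq ▸ h2)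
    have := congrArg (fun (T : (E × E) →L[ℝ] ℝ) => T u) huniq
    simpa using this
  -- final algebra
  set Au := fderiv ℝ Q z u with hAu
  set Av := fderiv ℝ Q z v with hAv
  have e1 : ⟪Au, fderiv ℝ P z v⟫ = ⟪Au, v.2⟫ - h * L (Av, v.2) (Au, 0) := keyP Au v
  have e2 : ⟪Av, fderiv ℝ P z u⟫ = ⟪Av, u.2⟫ - h * L (Au, u.2) (Av, 0) := keyP Av u
  have e3 : ⟪v.2, Au⟫ = ⟪v.2, u.1⟫ + h * L (Au, u.2) (0, v.2) := keyQ v.2 u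
  have e4 : ⟪u.2, Av⟫ = ⟪u.2, v.1⟫ + h * L (Av, v.2) (0, u.2) := keyQ u.2 v
  have hbil1 : L (Au, u.2) (Av, 0) + L (Au, u.2) (0, v.2) = L (Au, u.2) (Av, v.2) := by
    rw [← ContinuousLinearMap.map_add]
    norm_num
  have hbil2 : L (Av, v.2) (Au, 0) + L (Av, v.2) (0, u.2) = L (Av, v.2) (Au, u.2) := by
    rw [← ContinuousLinearMap.map_add]
    norm_num
  have hsy := hsymm (Au, u.2) (Av, v.2)
  have c1 : ⟪fderiv ℝ P z u, Av⟫ = ⟪Av, fderiv ℝ P z u⟫ := real_inner_comm _ _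
  have c2 : ⟪Au, v.2⟫ = ⟪v.2, Au⟫ := real_inner_comm _ _
  have c3 : ⟪Av, u.2⟫ = ⟪u.2, Av⟫ := real_inner_comm _ _
  have c4 : ⟪v.2, u.1⟫ = ⟪u.1, v.2⟫ := real_inner_comm _ _
  have key : (L (Au, u.2)) (0, v.2) - (L (Av, v.2)) (Au, 0)
      - (L (Av, v.2)) (0, u.2) + (L (Au, u.2)) (Av, 0) = 0 := by
    linarith [hbil1, hbil2, hsy]
  rw [c1, e1, e2, c2, e3, c3, e4, c4]
  linear_combination h * key

end Aux

/-- The implicit first-order method (7.3) is a contact (symplectic) transformation: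
if `Q(α,β) = α + h·∇₂H(Q(α,β), β)` and `P(α,β) = β − h·∇₁H(Q(α,β), β)` with
`φ = (Q, P)` differentiable and `H` twice continuously differentiable, then the
derivative of `φ` preserves the standard symplectic form
`ω((a,b),(a',b')) = ⟪a,b'⟫ − ⟪b,a'⟫`. -/
theorem deVogelaere_method_7_3_contact
    (n : ℕ)
    (H : (EuclideanSpace ℝ (Fin n)) × (EuclideanSpace ℝ (Fin n)) → ℝ)
    (hH : ContDiff ℝ 2 H) (h : ℝ)
    (Q P : (EuclideanSpace ℝ (Fin n)) × (EuclideanSpace ℝ (Fin n)) →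
      EuclideanSpace ℝ (Fin n))
    (hφ : Differentiable ℝ
      (fun z : (EuclideanSpace ℝ (Fin n)) × (EuclideanSpace ℝ (Fin n)) => (Q z, P z)))
    (hQ : ∀ z : (EuclideanSpace ℝ (Fin n)) × (EuclideanSpace ℝ (Fin n)),
      Q z = z.1 + h • gradient (fun p => H (Q z, p)) z.2)
    (hP : ∀ z : (EuclideanSpace ℝ (Fin n)) × (EuclideanSpace ℝ (Fin n)),
      P z = z.2 - h • gradient (fun q => H (q, z.2)) (Q z)) :
    ∀ (z u v : (EuclideanSpace ℝ (Fin n)) × (EuclideanSpace ℝ (Fin n))),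
      ⟪(fderiv ℝ (fun w => (Q w, P w)) z u).1, (fderiv ℝ (fun w => (Q w, P w)) z v).2⟫
        - ⟪(fderiv ℝ (fun w => (Q w, P w)) z u).2,
            (fderiv ℝ (fun w => (Q w, P w)) z v).1⟫
      = ⟪u.1, v.2⟫ - ⟪u.2, v.1⟫ :=
  contact_aux H hH h Q P hφ hQ hP
end
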